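/- arXiv:0810.4834 — 5 statements merged into one kernel-verified Lean document; each statement's English description precedes it below -/
import Mathlib

section
/- Let f : [0,∞) → ℂ be measurable and suppose the radial function φ : ℝ³ → ℂ defined by φ(x) = f(|x|) is integrable on ℝ³. Then for every ξ ∈ ℝ³ with ξ ≠ 0, the Fourier transform of φ (with the convention 𝓕φ(ξ) = ∫_{ℝ³} φ(x) e^{−2πi x·ξ} dx) satisfies 𝓕φ(ξ) = (2/|ξ|) ∫_0^∞ f(s) · s · sin(2π |ξ| s) ds. -/
open MeasureTheory

open Set Real Metric
open scoped Real ENNReal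

namespace Stmt1Aux


noncomputable def Φe : (ℝ × (ℝ × ℝ)) ≃ᵐ EuclideanSpace ℝ (Fin 3) :=
  (MeasurableEquiv.prodCongr (MeasurableEquiv.refl ℝ) MeasurableEquiv.finTwoArrow.symm).trans
    ((MeasurableEquiv.piFinSuccAbove (fun _ => ℝ) 0).symm.trans
      (MeasurableEquiv.toLp 2 (Fin 3 → ℝ)))

lemma Φe_measurePreserving : MeasurePreserving Φe := by
  have h : ⇑Φe = (⇑(MeasurableEquiv.toLp 2 (Fin 3 → ℝ)))
      ∘ (⇑(MeasurableEquiv.piFinSuccAbove (fun _ => ℝ) 0).symm)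
      ∘ (Prod.map (id : ℝ → ℝ) (⇑(MeasurableEquiv.finTwoArrow (α := ℝ)).symm)) := rfl
  rw [h]
  exact ((EuclideanSpace.volume_preserving_symm_measurableEquiv_toLp (Fin 3)).symm).comp
    (((volume_preserving_piFinSuccAbove (fun _ => ℝ) 0).symm).comp
      ((MeasurePreserving.id volume).prod (volume_preserving_finTwoArrow ℝ).symm))

lemma Φe_coords (p : ℝ × (ℝ × ℝ)) :
    Φe p 0 = p.1 ∧ Φe p 1 = p.2.1 ∧ Φe p 2 = p.2.2 := by
  have h : ∀ j : Fin 3, Φe p j =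
      (Fin.cons p.1 (Fin.cons p.2.1 (Fin.cons p.2.2 finZeroElim)) : ∀ _ : Fin 3, ℝ) j := by
    intro j
    simp [Φe, MeasurableEquiv.piFinSuccAbove, MeasurableEquiv.finTwoArrow,
      MeasurableEquiv.prodCongr, MeasurableEquiv.coe_toLp, Fin.consEquiv]
  refine ⟨?_, ?_, ?_⟩
  · rw [h 0, Fin.cons_zero]
  · rw [h 1, show (1 : Fin 3) = Fin.succ 0 from rfl, Fin.cons_succ, Fin.cons_zero]
  · rw [h 2, show (2 : Fin 3) = Fin.succ 1 from rfl, Fin.cons_succ,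
      show (1 : Fin 2) = Fin.succ 0 from rfl, Fin.cons_succ, Fin.cons_zero]

lemma Φe_norm (p : ℝ × (ℝ × ℝ)) :
    ‖Φe p‖ = Real.sqrt (p.1^2 + (p.2.1^2 + p.2.2^2)) := by
  obtain ⟨h0, h1, h2⟩ := Φe_coords p
  rw [EuclideanSpace.norm_eq]
  congr 1
  rw [Fin.sum_univ_three, h0, h1, h2]
  simp only [Real.norm_eq_abs, sq_abs]
  ring

lemma Φe_inner (p : ℝ × (ℝ × ℝ)) (r : ℝ) :
    (inner ℝ (Φe p) (r • EuclideanSpace.single (0 : Fin 3) (1:ℝ)) : ℝ) = r * p.1 := by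
  rw [real_inner_smul_right, EuclideanSpace.inner_single_right]
  simp [(Φe_coords p).1]

/-- key integrability: `∫ s^2 ‖f s‖ < ∞` on `(0,∞)`. -/
lemma key_lintegral (f : ℝ → ℂ) (hf : Measurable f)
    (hint : Integrable (fun x : EuclideanSpace ℝ (Fin 3) => f ‖x‖)) :
    ∫⁻ s in Set.Ioi (0:ℝ), ENNReal.ofReal (s^2) * ‖f s‖₊ < ⊤ := by
  have h1 : ∫⁻ x : EuclideanSpace ℝ (Fin 3), ‖f ‖x‖‖₊ < ⊤ := hint.2
  have h2 : ∫⁻ x in ({0}ᶜ : Set (EuclideanSpace ℝ (Fin 3))), ‖f ‖x‖‖₊ < ⊤ :=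
    lt_of_le_of_lt (lintegral_mono' Measure.restrict_le_self le_rfl) h1
  rw [← lintegral_subtype_comap (measurableSet_singleton (0:EuclideanSpace ℝ (Fin 3))).compl] at h2
  have hg : Measurable fun q : sphere (0:EuclideanSpace ℝ (Fin 3)) 1 × Ioi (0:ℝ) =>
      (‖f q.2‖₊ : ℝ≥0∞) :=
    (hf.comp (measurable_subtype_coe.comp measurable_snd)).nnnorm.coe_nnreal_ennreal
  have h3 := (volume.measurePreserving_homeomorphUnitSphereProd
    (E := EuclideanSpace ℝ (Fin 3))).lintegral_comp hg
  have h4 : ∀ x : ({0}ᶜ : Set (EuclideanSpace ℝ (Fin 3))),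
      (‖f (((homeomorphUnitSphereProd (EuclideanSpace ℝ (Fin 3))) x).2 : ℝ)‖₊ : ℝ≥0∞)
      = ‖f ‖(x:EuclideanSpace ℝ (Fin 3))‖‖₊ := by intro x; simp
  simp_rw [h4] at h3
  rw [h3] at h2
  rw [lintegral_prod _ hg.aemeasurable] at h2
  simp only [lintegral_const] at h2
  have hdim : Module.finrank ℝ (EuclideanSpace ℝ (Fin 3)) - 1 = 2 := by
    simp [finrank_euclideanSpace]
  rw [hdim] at h2
  have hI : ∫⁻ (y : ↥(Ioi (0:ℝ))), (‖f ↑y‖₊ : ℝ≥0∞) ∂(Measure.volumeIoiPow 2)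
      = ∫⁻ s in Set.Ioi (0:ℝ), ENNReal.ofReal (s^2) * ‖f s‖₊ := by
    rw [Measure.volumeIoiPow,
      lintegral_withDensity_eq_lintegral_mul _ (by fun_prop) (by fun_prop)]
    simp only [Pi.mul_apply]
    exact lintegral_subtype_comap measurableSet_Ioi
      (fun s => ENNReal.ofReal (s^2) * ‖f s‖₊)
  rw [hI] at h2
  have hsphere : volume.toSphere (univ : Set (sphere (0:EuclideanSpace ℝ (Fin 3)) 1)) ≠ 0 := by
    rw [Measure.toSphere_apply_univ]
    simp only [ne_eq, mul_eq_zero, not_or]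
    exact ⟨by simp [finrank_euclideanSpace],
      (measure_ball_pos volume (0:EuclideanSpace ℝ (Fin 3)) one_pos).ne'⟩
  exact ENNReal.lt_top_of_mul_ne_top_left h2.ne hsphere

/-- substitution step -/
lemma subst_step (f : ℝ → ℂ) (z : ℝ) :
    ∫ t in Ioi (0:ℝ), (t:ℂ) * f (Real.sqrt (t^2 + z^2))
      = ∫ s in Ioi |z|, (s:ℂ) * f s := by
  have himg : (fun t => Real.sqrt (t^2 + z^2)) '' (Ioi 0) = Ioi |z| := by
    ext s
    simp only [mem_image, mem_Ioi]
    constructor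
    · rintro ⟨t, ht, rfl⟩
      have h1 : z^2 < t^2 + z^2 := by nlinarith
      calc |z| = Real.sqrt (z^2) := (Real.sqrt_sq_eq_abs z).symm
        _ < _ := Real.sqrt_lt_sqrt (sq_nonneg z) h1
    · intro hs
      have hs0 : 0 ≤ s := le_trans (abs_nonneg z) hs.le
      have hz2 : z^2 < s^2 := by
        have h := abs_lt.1 hs
        nlinarith
      refine ⟨Real.sqrt (s^2 - z^2), Real.sqrt_pos.2 (by linarith), ?_⟩
      rw [Real.sq_sqrt (by linarith : (0:ℝ) ≤ s^2 - z^2), sub_add_cancel, Real.sqrt_sq hs0]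
  have hderiv : ∀ t ∈ Ioi (0:ℝ), HasDerivWithinAt (fun t => Real.sqrt (t^2 + z^2))
      (t / Real.sqrt (t^2 + z^2)) (Ioi 0) t := by
    intro t ht
    have hpos : 0 < t^2 + z^2 := by nlinarith [mem_Ioi.1 ht, sq_nonneg z]
    have h1 : HasDerivAt (fun t : ℝ => t^2 + z^2) (2*t) t := by
      simpa using ((hasDerivAt_pow 2 t).add_const (z^2))
    have h2 := (Real.hasDerivAt_sqrt hpos.ne').comp t h1
    refine h2.hasDerivWithinAt.congr_deriv ?_
    field_simp
  have hinj : InjOn (fun t => Real.sqrt (t^2 + z^2)) (Ioi 0) := by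
    intro a ha b hb hab
    simp only [mem_Ioi] at ha hb
    have h1 : a^2 + z^2 = b^2 + z^2 := by
      have := congrArg (fun x : ℝ => x^2) hab
      simpa [Real.sq_sqrt, (by nlinarith [sq_nonneg z] : (0:ℝ) ≤ a^2+z^2),
        Real.sq_sqrt (by nlinarith [sq_nonneg z] : (0:ℝ) ≤ b^2+z^2)] using this
    have h2 : a^2 = b^2 := by linarith
    nlinarith
  have := integral_image_eq_integral_abs_deriv_smul measurableSet_Ioi hderiv hinj
    (fun s => (s:ℂ) * f s)
  rw [himg] at this
  rw [this]
  apply setIntegral_congr_fun measurableSet_Ioi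
  intro t ht
  have hpos : 0 < t^2 + z^2 := by nlinarith [mem_Ioi.1 ht, sq_nonneg z]
  have hs := Real.sqrt_pos.2 hpos
  have ht0 : (0:ℝ) < t := mem_Ioi.1 ht
  simp only []
  rw [abs_of_nonneg (div_nonneg ht0.le hs.le), Complex.real_smul]
  have hsC : ((Real.sqrt (t^2+z^2) : ℝ) : ℂ) ≠ 0 := by exact_mod_cast hs.ne'
  push_cast
  field_simp

/-- polar coordinates step -/
lemma polar_step (f : ℝ → ℂ) (z : ℝ) :
    ∫ y : ℝ × ℝ, f (Real.sqrt (z^2 + (y.1^2 + y.2^2)))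
      = (2*π:ℝ) * ∫ t in Ioi (0:ℝ), (t:ℂ) * f (Real.sqrt (t^2 + z^2)) := by
  rw [← integral_comp_polarCoord_symm (fun y : ℝ × ℝ => f (Real.sqrt (z^2 + (y.1^2 + y.2^2))))]
  have h1 : ∀ p : ℝ × ℝ, p ∈ polarCoord.target →
      p.1 • f (Real.sqrt (z^2 + ((polarCoord.symm p).1^2 + (polarCoord.symm p).2^2)))
        = (p.1 : ℂ) * f (Real.sqrt (p.1^2 + z^2)) := by
    intro p hp
    rw [Complex.real_smul]
    congr 2
    rw [polarCoord_symm_apply]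
    simp only
    rw [mul_pow, mul_pow, ← mul_add, Real.cos_sq_add_sin_sq, mul_one, add_comm]
  rw [setIntegral_congr_fun (polarCoord.open_target.measurableSet) h1]
  have h2 : polarCoord.target = Ioi (0:ℝ) ×ˢ Ioo (-π) π := rfl
  rw [h2, Measure.volume_eq_prod, ← Measure.prod_restrict,
    integral_fun_fst (fun t : ℝ => (t:ℂ) * f (Real.sqrt (t^2 + z^2)))]
  rw [measureReal_restrict_apply_univ, Real.volume_real_Ioo]
  rw [max_eq_left (by nlinarith [Real.pi_pos] : (0:ℝ) ≤ π - -π)]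
  rw [show π - -π = 2*π by ring]
  rw [Complex.real_smul]

/-- character integral -/
lemma char_integral (r s : ℝ) (hr : r ≠ 0) (hs : 0 < s) :
    ∫ z in Ioo (-s) s, (Real.fourierChar (-(r*z)) : ℂ)
      = ((Real.sin (2*π*r*s) / (π*r) : ℝ) : ℂ) := by
  have hc : ((-(2*π*r) : ℝ) : ℂ) * Complex.I ≠ 0 := by
    simp [Complex.ext_iff, Real.pi_ne_zero, hr]
  calc ∫ z in Ioo (-s) s, (Real.fourierChar (-(r*z)) : ℂ)
      = ∫ z in Ioo (-s) s, Complex.exp ((((-(2*π*r) : ℝ) : ℂ) * Complex.I) * z) := by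
        apply setIntegral_congr_fun measurableSet_Ioo
        intro z _
        show (Real.fourierChar (-(r*z)) : ℂ) = _
        rw [Real.fourierChar_apply]
        congr 1
        push_cast
        ring
    _ = ∫ z in (-s)..s, Complex.exp ((((-(2*π*r) : ℝ) : ℂ) * Complex.I) * z) := by
        rw [intervalIntegral.integral_of_le (by linarith), ← integral_Ioc_eq_integral_Ioo]
    _ = (Complex.exp ((((-(2*π*r) : ℝ) : ℂ) * Complex.I) * s)
          - Complex.exp ((((-(2*π*r) : ℝ) : ℂ) * Complex.I) * (-s : ℝ)))
        / (((-(2*π*r) : ℝ) : ℂ) * Complex.I) := by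
        rw [integral_exp_mul_complex hc]
    _ = _ := by
        have e1 : (((-(2*π*r) : ℝ) : ℂ) * Complex.I) * (s:ℝ)
            = ((-(2*π*r)*s : ℝ) : ℂ) * Complex.I := by push_cast; ring
        have e2 : (((-(2*π*r) : ℝ) : ℂ) * Complex.I) * ((-s : ℝ) : ℝ)
            = ((-(-(2*π*r)*s) : ℝ) : ℂ) * Complex.I := by push_cast; ring
        rw [e1, e2, div_eq_iff hc, Complex.exp_mul_I, Complex.exp_mul_I]
        rw [← Complex.ofReal_cos, ← Complex.ofReal_sin, ← Complex.ofReal_cos,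
          ← Complex.ofReal_sin]
        rw [Real.cos_neg, Real.sin_neg]
        have h3 : Real.sin (-(2*π*r)*s) = - Real.sin (2*π*r*s) := by
          rw [show -(2*π*r)*s = -(2*π*r*s) by ring, Real.sin_neg]
        rw [h3]
        have hπ : ((π:ℝ):ℂ) ≠ 0 := by exact_mod_cast Real.pi_ne_zero
        have hrC : ((r:ℝ):ℂ) ≠ 0 := by exact_mod_cast hr
        push_cast
        field_simp
        ring

end Stmt1Aux

open Stmt1Aux

/-- Fourier transform of a radial function in ℝ³ (Lemma 3.4): with the convention
`𝓕φ(ξ) = ∫ φ(x) e^{−2πi x·ξ} dx`, if `φ(x) = f(|x|)` is integrable then for `ξ ≠ 0`,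
`𝓕φ(ξ) = (2/|ξ|) ∫_0^∞ f(s) s sin(2π|ξ|s) ds`. -/
theorem stmt_1 (f : ℝ → ℂ) (hf : Measurable f)
    (hint : Integrable (fun x : EuclideanSpace ℝ (Fin 3) => f ‖x‖)) :
    ∀ ξ : EuclideanSpace ℝ (Fin 3), ξ ≠ 0 →
      FourierTransform.fourier (fun x : EuclideanSpace ℝ (Fin 3) => f ‖x‖) ξ =
        ((2 / ‖ξ‖ : ℝ) : ℂ) *
          ∫ s in Set.Ioi (0 : ℝ), f s * (s : ℂ) * (Real.sin (2 * Real.pi * ‖ξ‖ * s) : ℂ) := by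
  intro ξ hξ
  have hr : 0 < ‖ξ‖ := norm_pos_iff.2 hξ
  set r : ℝ := ‖ξ‖ with hrdef
  set ξ₀ : EuclideanSpace ℝ (Fin 3) := r • EuclideanSpace.single (0 : Fin 3) (1:ℝ) with hξ₀def
  -- Step 1: rotation
  have hrot : FourierTransform.fourier (fun x : EuclideanSpace ℝ (Fin 3) => f ‖x‖) ξ =
      FourierTransform.fourier (fun x : EuclideanSpace ℝ (Fin 3) => f ‖x‖) ξ₀ := by
    have hnorm : ‖ξ₀‖ = ‖ξ‖ := by
      simp [hξ₀def, norm_smul, EuclideanSpace.norm_single, abs_of_nonneg (norm_nonneg ξ), abs_of_pos hr, hrdef]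
    set A := Submodule.reflection (ℝ ∙ (ξ₀ - ξ))ᗮ with hA
    have hAξ₀ : A ξ₀ = ξ := Submodule.reflection_sub hnorm
    have h := Real.fourier_comp_linearIsometry
      (A : EuclideanSpace ℝ (Fin 3) ≃ₗᵢ[ℝ] EuclideanSpace ℝ (Fin 3))
      (fun x => f ‖x‖) ξ₀
    rw [hAξ₀] at h
    rw [← h]
    exact congrArg (fun g : EuclideanSpace ℝ (Fin 3) → ℂ => FourierTransform.fourier g ξ₀)
      (funext fun x => by simp [Function.comp_apply])
  rw [hrot, Real.fourier_eq]
  -- Step 2: change of variables to ℝ × (ℝ × ℝ)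
  rw [← Φe_measurePreserving.integral_comp Φe.measurableEmbedding
    (fun v : EuclideanSpace ℝ (Fin 3) => (Real.fourierChar (-(inner ℝ v ξ₀ : ℝ)) : Circle) • f ‖v‖)]
  have hstep2 : ∀ p : ℝ × (ℝ × ℝ),
      (Real.fourierChar (-(inner ℝ (Φe p) ξ₀ : ℝ)) : Circle) • f ‖Φe p‖
        = (Real.fourierChar (-(r * p.1)) : ℂ) * f (Real.sqrt (p.1^2 + (p.2.1^2 + p.2.2^2))) := by
    intro p
    rw [Φe_inner p r, Φe_norm p, Circle.smul_def, smul_eq_mul]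
  simp_rw [hstep2]
  -- Step 3: integrability on the product space
  have hmeas : Measurable fun p : ℝ × (ℝ × ℝ) =>
      f (Real.sqrt (p.1^2 + (p.2.1^2 + p.2.2^2))) := by fun_prop
  have hchar_cont : Continuous fun p : ℝ × (ℝ × ℝ) => (Real.fourierChar (-(r * p.1)) : ℂ) := by
    apply Continuous.comp continuous_subtype_val
    exact Real.continuous_fourierChar.comp (by fun_prop)
  have Int1 : Integrable (fun p : ℝ × (ℝ × ℝ) =>
      (Real.fourierChar (-(r * p.1)) : ℂ) * f (Real.sqrt (p.1^2 + (p.2.1^2 + p.2.2^2)))) := by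
    have h0 : Integrable (fun p : ℝ × (ℝ × ℝ) =>
        f (Real.sqrt (p.1^2 + (p.2.1^2 + p.2.2^2)))) := by
      have := (Φe_measurePreserving.integrable_comp_emb Φe.measurableEmbedding).2 hint
      have he : (fun x : EuclideanSpace ℝ (Fin 3) => f ‖x‖) ∘ Φe
          = fun p : ℝ × (ℝ × ℝ) => f (Real.sqrt (p.1^2 + (p.2.1^2 + p.2.2^2))) := by
        ext p
        simp [Function.comp, Φe_norm p]
      rwa [he] at this
    apply h0.bdd_mul (c := 1) hchar_cont.aestronglyMeasurable
    exact Filter.Eventually.of_forall (fun p => (Circle.norm_coe _).le)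
  -- Step 4: Fubini
  rw [Measure.volume_eq_prod, integral_prod _ (by rwa [← Measure.volume_eq_prod])]
  -- Step 5: inner integral via polar coordinates and substitution
  have hinner : ∀ z : ℝ,
      (∫ y : ℝ × ℝ, (Real.fourierChar (-(r * z)) : ℂ)
          * f (Real.sqrt (z^2 + (y.1^2 + y.2^2))))
        = ((2*π:ℝ):ℂ) * ((Real.fourierChar (-(r * z)) : ℂ)
            * ∫ s in Ioi |z|, (s:ℂ) * f s) := by
    intro z
    rw [integral_const_mul, polar_step f z, subst_step f z]
    ring
  simp_rw [hinner, integral_const_mul]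
  -- Step 6: rewrite as an indicator double integral and swap
  set K : ℝ → ℝ → ℂ := fun z s =>
    Set.indicator (Ioi |z|) (fun s => (Real.fourierChar (-(r * z)) : ℂ) * ((s:ℂ) * f s)) s
    with hK
  have hKz : ∀ z : ℝ, ((Real.fourierChar (-(r * z)) : ℂ) * ∫ s in Ioi |z|, (s:ℂ) * f s)
      = ∫ s : ℝ, K z s := by
    intro z
    rw [hK]
    simp only []
    rw [integral_indicator measurableSet_Ioi, integral_const_mul]
  simp_rw [hKz]
  -- measurability of the kernel
  have hA : MeasurableSet {q : ℝ × ℝ | |q.1| < q.2} :=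
    (isOpen_lt (by fun_prop) continuous_snd).measurableSet
  have hgm : Measurable fun q : ℝ × ℝ =>
      (Real.fourierChar (-(r * q.1)) : ℂ) * ((q.2:ℂ) * f q.2) := by
    apply Measurable.mul
    · exact (Continuous.comp continuous_subtype_val
        (Real.continuous_fourierChar.comp (by fun_prop))).measurable
    · exact (Complex.measurable_ofReal.comp measurable_snd).mul (hf.comp measurable_snd)
  have hKuncurry : Function.uncurry K
      = Set.indicator {q : ℝ × ℝ | |q.1| < q.2}
          (fun q => (Real.fourierChar (-(r * q.1)) : ℂ) * ((q.2:ℂ) * f q.2)) := by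
    ext q
    rw [Function.uncurry, hK]
    simp only [Set.indicator_apply, mem_Ioi, mem_setOf_eq]
  have hKmeas : Measurable (Function.uncurry K) := by
    rw [hKuncurry]; exact hgm.indicator hA
  have hchar1 : ∀ t : ℝ, ‖(Real.fourierChar t : ℂ)‖₊ = 1 := by
    intro t
    apply NNReal.coe_injective
    simp [coe_nnnorm, Circle.norm_coe]
  -- Step 7: integrability of the kernel
  have IntK : Integrable (Function.uncurry K) (volume.prod volume) := by
    constructor
    · exact hKmeas.aestronglyMeasurable
    · show (∫⁻ q, ‖Function.uncurry K q‖₊ ∂(volume.prod volume)) < ⊤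
      rw [lintegral_prod_symm _ (hKmeas.nnnorm.coe_nnreal_ennreal).aemeasurable]
      have hzint : ∀ s : ℝ, (∫⁻ z, (‖Function.uncurry K (z, s)‖₊ : ℝ≥0∞))
          = ENNReal.ofReal (2*s) * ‖(s:ℂ) * f s‖₊ := by
        intro s
        have : (fun z => (‖Function.uncurry K (z, s)‖₊ : ℝ≥0∞))
            = Set.indicator (Ioo (-s) s) (fun _ => (‖(s:ℂ) * f s‖₊ : ℝ≥0∞)) := by
          ext z
          rw [hKuncurry]
          rw [Set.indicator_apply, Set.indicator_apply]
          simp only [mem_setOf_eq, mem_Ioo]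
          by_cases h : |z| < s
          · rw [if_pos h, if_pos (abs_lt.1 h), nnnorm_mul, hchar1, one_mul]
          · rw [if_neg h, if_neg (fun hc => h (abs_lt.2 hc))]
            simp
        rw [this, lintegral_indicator measurableSet_Ioo, setLIntegral_const, Real.volume_Ioo,
          mul_comm]
        congr 2
        ring
      simp_rw [hzint]
      have hbound : (fun s : ℝ => ENNReal.ofReal (2*s) * ‖(s:ℂ) * f s‖₊)
          = Set.indicator (Ioi (0:ℝ))
              (fun s => 2 * (ENNReal.ofReal (s^2) * ‖f s‖₊)) := by
        ext s
        simp only [Set.indicator_apply, mem_Ioi]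
        by_cases h : 0 < s
        · rw [if_pos h, nnnorm_mul]
          have h1 : (‖(s:ℂ)‖₊ : ℝ≥0∞) = ENNReal.ofReal s := by
            simp [← ENNReal.ofReal_coe_nnreal, coe_nnnorm, Complex.norm_real,
              Real.norm_eq_abs, abs_of_pos h]
          rw [ENNReal.coe_mul, h1, ← mul_assoc, ← ENNReal.ofReal_mul (by linarith)]
          rw [show (2:ℝ≥0∞) * (ENNReal.ofReal (s^2) * ‖f s‖₊)
              = ((2:ℝ≥0∞) * ENNReal.ofReal (s^2)) * ‖f s‖₊ by ring]
          congr 1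
          rw [← ENNReal.ofReal_ofNat, ← ENNReal.ofReal_mul (by norm_num)]
          congr 1
          ring
        · rw [if_neg h]
          push_neg at h
          rw [ENNReal.ofReal_eq_zero.2 (by linarith), zero_mul]
      rw [hbound, lintegral_indicator measurableSet_Ioi, lintegral_const_mul _ (by fun_prop)]
      exact ENNReal.mul_lt_top (by simp) (key_lintegral f hf hint)
  rw [integral_integral_swap IntK]
  -- Step 8: evaluate the inner z-integral
  have hzeval : ∀ s : ℝ, (∫ z : ℝ, K z s)
      = (∫ z in Ioo (-s) s, (Real.fourierChar (-(r * z)) : ℂ)) * ((s:ℂ) * f s) := by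
    intro s
    have : (fun z => K z s) = Set.indicator (Ioo (-s) s)
        (fun z => (Real.fourierChar (-(r * z)) : ℂ) * ((s:ℂ) * f s)) := by
      ext z
      rw [hK]
      simp only [Set.indicator_apply, mem_Ioi, mem_Ioo]
      by_cases h : |z| < s
      · rw [if_pos h, if_pos (abs_lt.1 h)]
      · rw [if_neg h, if_neg (fun hc => h (abs_lt.2 hc))]
    rw [this, integral_indicator measurableSet_Ioo, integral_mul_const]
  simp_rw [hzeval]
  -- Step 9: restrict to (0, ∞) and evaluate the character integral
  have hsupp : ∀ s : ℝ, s ∉ Ioi (0:ℝ) →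
      (∫ z in Ioo (-s) s, (Real.fourierChar (-(r * z)) : ℂ)) * ((s:ℂ) * f s) = 0 := by
    intro s hs
    rw [mem_Ioi, not_lt] at hs
    rw [Set.Ioo_eq_empty (by linarith), Measure.restrict_empty, integral_zero_measure, zero_mul]
  rw [← setIntegral_eq_integral_of_forall_compl_eq_zero hsupp]
  have hfin : ∀ s ∈ Ioi (0:ℝ),
      (∫ z in Ioo (-s) s, (Real.fourierChar (-(r * z)) : ℂ)) * ((s:ℂ) * f s)
        = ((1/(π*r) : ℝ):ℂ) * (f s * (s:ℂ) * ((Real.sin (2*π*r*s) : ℝ) : ℂ)) := by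
    intro s hs
    rw [char_integral r s hr.ne' (mem_Ioi.1 hs)]
    push_cast
    ring
  rw [setIntegral_congr_fun measurableSet_Ioi hfin, integral_const_mul]
  rw [show ((2*π:ℝ):ℂ) * (((1/(π*r) : ℝ):ℂ)
      * ∫ s in Ioi (0:ℝ), f s * (s:ℂ) * ((Real.sin (2*π*r*s) : ℝ) : ℂ))
    = (((2*π:ℝ):ℂ) * ((1/(π*r) : ℝ):ℂ))
      * ∫ s in Ioi (0:ℝ), f s * (s:ℂ) * ((Real.sin (2*π*r*s) : ℝ) : ℂ) from (mul_assoc _ _ _).symm]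
  congr 1
  have hπC : ((π:ℝ):ℂ) ≠ 0 := by exact_mod_cast Real.pi_ne_zero
  have hrC : ((r:ℝ):ℂ) ≠ 0 := by exact_mod_cast hr.ne'
  push_cast
  field_simp
end

section
/- Let p > 3, a = 2/(p−1), m = (p−1)/2, and let β > 0 satisfy a + β < 1. Set γ = (1−a)/(1−a + β(p−1)) and β' = γβp. Let w : [1,∞) → ℝ be continuously differentiable and let C > 0 be such that for all r ≥ 1: |w(r)| ≤ C r^{1−a−β} and (∫_{r}^{∞} |w'(s)|^m ds)^{1/m} ≤ C r^{−βp}. Then 0 < γ < 1, β' > β, and for all r ≥ 1: |w(r)| ≤ 2C r^{1−a−β'}. -/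
open MeasureTheory

/-- The improvement step in the iteration concluding the proof of Theorem 3.2:
with `p > 3`, `a = 2/(p−1)`, `m = (p−1)/2`, `β > 0`, `a + β < 1`,
`γ = (1−a)/(1−a+β(p−1))` and `β' = γβp`, if `w` is C¹ on `[1,∞)` with
`|w(r)| ≤ C r^(1−a−β)` and `(∫_r^∞ |w'|^m)^(1/m) ≤ C r^(−βp)` for `r ≥ 1`, then
`0 < γ < 1`, `β' > β`, and `|w(r)| ≤ 2C r^(1−a−β')` for `r ≥ 1`. -/
theorem stmt_8 (p : ℝ) (hp : 3 < p) (a m β γ β' : ℝ)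
    (ha : a = 2 / (p - 1)) (hm : m = (p - 1) / 2) (hβ : 0 < β) (hab : a + β < 1)
    (hγ : γ = (1 - a) / (1 - a + β * (p - 1))) (hβ' : β' = γ * β * p)
    (w : ℝ → ℝ)
    (hwdiff : ∀ s ∈ Set.Ici (1 : ℝ), DifferentiableAt ℝ w s)
    (hwcont : ContinuousOn (deriv w) (Set.Ici (1 : ℝ)))
    (C : ℝ) (hC : 0 < C)
    (hint : ∀ r ≥ (1 : ℝ), IntegrableOn (fun s => |deriv w s| ^ m) (Set.Ioi r))
    (h1 : ∀ r ≥ (1 : ℝ), |w r| ≤ C * r ^ (1 - a - β))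
    (h2 : ∀ r ≥ (1 : ℝ), (∫ s in Set.Ioi r, |deriv w s| ^ m) ^ (1 / m) ≤ C * r ^ (-(β * p))) :
    0 < γ ∧ γ < 1 ∧ β < β' ∧ ∀ r ≥ (1 : ℝ), |w r| ≤ 2 * C * r ^ (1 - a - β') := by
  have hp1 : (0:ℝ) < p - 1 := by linarith
  have ha1 : a < 1 := by rw [ha]; rw [div_lt_one hp1]; linarith
  have ha0 : 0 < a := by rw [ha]; exact div_pos (by norm_num) hp1
  have hden : 0 < 1 - a + β * (p - 1) := by nlinarith
  have hγ0 : 0 < γ := by rw [hγ]; exact div_pos (by linarith) hden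
  have hγ1 : γ < 1 := by
    rw [hγ, div_lt_one hden]; nlinarith
  have hkey : γ * (1 - a + β * (p - 1)) = 1 - a := by
    rw [hγ]; field_simp
  have hββ' : β < β' := by
    rw [hβ']
    nlinarith [mul_pos hγ0 hβ]
  have hm1 : 1 < m := by rw [hm]; linarith
  have hm0 : 0 < m := by linarith
  -- conjugate exponent
  have hmm1 : 0 < m - 1 := by linarith
  have hmne : m ≠ 0 := ne_of_gt hm0
  have hm1ne : m - 1 ≠ 0 := ne_of_gt hmm1
  have hpq : m.HolderConjugate (m / (m - 1)) := (Real.holderConjugate_iff_eq_conjExponent hm1).2 rfl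
  set q : ℝ := m / (m - 1) with hq
  have hq0 : 0 < q := by rw [hq]; positivity
  have hinvq : 1 / q = 1 - a := by
    rw [hq, ha, hm]
    field_simp
  have hexp1 : γ * (1 - a - β) = 1 - a - β' := by
    rw [hβ']; linear_combination hkey
  have hexp2 : γ * (-(β * p)) = -β' := by rw [hβ']; ring
  refine ⟨hγ0, hγ1, hββ', fun r hr => ?_⟩
  have hr0 : (0:ℝ) < r := by linarith
  set t : ℝ := r ^ γ with htdef
  have ht1 : 1 ≤ t := Real.one_le_rpow hr hγ0.le
  have htr : t ≤ r := by
    calc t ≤ r ^ (1:ℝ) := Real.rpow_le_rpow_of_exponent_le hr hγ1.le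
    _ = r := Real.rpow_one r
  have hsub : Set.uIcc t r ⊆ Set.Ici (1:ℝ) := by
    rw [Set.uIcc_of_le htr]
    exact fun x hx => le_trans ht1 hx.1
  have hcont' : ContinuousOn (deriv w) (Set.uIcc t r) := hwcont.mono hsub
  have hII : IntervalIntegrable (deriv w) volume t r := hcont'.intervalIntegrable
  have hftc : ∫ s in t..r, deriv w s = w r - w t :=
    intervalIntegral.integral_deriv_eq_sub (fun x hx => hwdiff x (hsub hx)) hII
  -- Hölder on Ioc t r
  have hIoc_sub : Set.Ioc t r ⊆ Set.Ici (1:ℝ) := fun x hx => le_trans ht1 hx.1.le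
  have hmeas : AEStronglyMeasurable (fun x => |deriv w x|)
      (volume.restrict (Set.Ioc t r)) :=
    ContinuousOn.aestronglyMeasurable (hwcont.mono hIoc_sub).abs measurableSet_Ioc
  haveI : IsFiniteMeasure (volume.restrict (Set.Ioc t r)) :=
    ⟨by rw [Measure.restrict_apply_univ]; exact (measure_Ioc_lt_top)⟩
  obtain ⟨M, hM⟩ := (isCompact_Icc (a := t) (b := r)).exists_bound_of_continuousOn
    (hwcont.mono (fun x hx => le_trans ht1 hx.1))
  have hmem : MemLp (fun x => |deriv w x|) (ENNReal.ofReal m)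
      (volume.restrict (Set.Ioc t r)) := by
    refine MemLp.of_bound hmeas M ?_
    filter_upwards [ae_restrict_mem measurableSet_Ioc] with x hx
    simpa [abs_abs] using hM x (Set.Ioc_subset_Icc_self hx)
  have hmem1 : MemLp (fun _ : ℝ => (1:ℝ)) (ENNReal.ofReal q)
      (volume.restrict (Set.Ioc t r)) := memLp_const 1
  have holder := integral_mul_le_Lp_mul_Lq_of_nonneg hpq
    (f := fun x => |deriv w x|) (g := fun _ => (1:ℝ))
    (Filter.Eventually.of_forall fun x => abs_nonneg _)
    (Filter.Eventually.of_forall fun _ => zero_le_one) hmem hmem1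
  simp only [mul_one, Real.one_rpow] at holder
  have h1int : ∫ _ in Set.Ioc t r, (1:ℝ) = r - t := by
    simp [Real.volume_Ioc, ENNReal.toReal_ofReal (sub_nonneg.2 htr), htr]
  rw [h1int] at holder
  -- bound the Lᵐ factor
  have hIoc_le : ∫ x in Set.Ioc t r, |deriv w x| ^ m ≤ ∫ x in Set.Ioi t, |deriv w x| ^ m := by
    apply setIntegral_mono_set (hint t ht1)
    · exact Filter.Eventually.of_forall fun x => by positivity
    · exact Filter.Eventually.of_forall (Set.Ioc_subset_Ioi_self)
  have hIoc_nonneg : 0 ≤ ∫ x in Set.Ioc t r, |deriv w x| ^ m :=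
    setIntegral_nonneg measurableSet_Ioc fun x _ => by positivity
  have hLm : (∫ x in Set.Ioc t r, |deriv w x| ^ m) ^ (1/m) ≤ C * t ^ (-(β * p)) :=
    le_trans (Real.rpow_le_rpow hIoc_nonneg hIoc_le (by positivity)) (h2 t ht1)
  have hLq : (r - t) ^ (1/q) ≤ r ^ (1/q) :=
    Real.rpow_le_rpow (sub_nonneg.2 htr) (by linarith) (by positivity)
  have hprod : ∫ x in Set.Ioc t r, |deriv w x| ≤ (C * t ^ (-(β * p))) * r ^ (1/q) := by
    refine le_trans holder (mul_le_mul hLm hLq (Real.rpow_nonneg (sub_nonneg.2 htr) _) ?_)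
    positivity
  -- rewrite powers of t in terms of r
  have ht_pow : ∀ x : ℝ, t ^ x = r ^ (γ * x) := fun x =>
    (Real.rpow_mul hr0.le γ x).symm
  -- assemble
  have hwt : |w t| ≤ C * r ^ (1 - a - β') := by
    have := h1 t ht1
    rwa [ht_pow, hexp1] at this
  have habs : |∫ s in t..r, deriv w s| ≤ ∫ x in Set.Ioc t r, |deriv w x| := by
    have h := intervalIntegral.abs_integral_le_integral_abs (f := deriv w) (μ := volume) htr
    simpa [intervalIntegral.integral_of_le htr] using h
  have hsecond : (C * t ^ (-(β * p))) * r ^ (1/q) = C * r ^ (1 - a - β') := by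
    rw [ht_pow, hexp2, hinvq, mul_assoc, ← Real.rpow_add hr0]
    ring_nf
  have : |w r| ≤ |w t| + |∫ s in t..r, deriv w s| := by
    have : w r = w t + ∫ s in t..r, deriv w s := by rw [hftc]; ring
    rw [this]; exact abs_add_le _ _
  calc |w r| ≤ |w t| + |∫ s in t..r, deriv w s| := this
  _ ≤ C * r ^ (1 - a - β') + (C * t ^ (-(β * p))) * r ^ (1/q) :=
      add_le_add hwt (le_trans habs hprod)
  _ = 2 * C * r ^ (1 - a - β') := by rw [hsecond]; ring
end

section
/- Let p ≥ 1, let I ⊆ ℝ be an open interval, let R > 0, and let u : ℝ³ × I → ℝ be twice continuously differentiable, satisfy ∂_t² u = Δu − |u|^{p−1}u on ℝ³ × I (Δ the Laplacian in the space variable), and suppose u(·,t) vanishes outside the ball {|x| ≤ R} for every t ∈ I. Then for every t ∈ I, the function t ↦ ∫_{ℝ³} (x·∇u(x,t)) ∂_t u(x,t) dx is differentiable, with derivative −(3/2)∫_{ℝ³} (∂_t u)² dx + (1/2)∫_{ℝ³} |∇u|² dx + (3/(p+1))∫_{ℝ³} |u|^{p+1} dx. -/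
open MeasureTheory

/-- The `i`-th partial derivative in the space variable. -/
noncomputable def pder (v : (Fin 3 → ℝ) → ℝ) (i : Fin 3) (x : Fin 3 → ℝ) : ℝ :=
  deriv (fun s => v (Function.update x i s)) (x i)

/-- The Laplacian in the space variable: the sum of the three second partial
derivatives. -/
noncomputable def lap (v : (Fin 3 → ℝ) → ℝ) (x : Fin 3 → ℝ) : ℝ :=
  ∑ i, deriv (fun s => deriv (fun s' => v (Function.update x i s')) s) (x i)

open Filter Topology

noncomputable section VirialHelpers

def ee (i : Fin 3) : Fin 3 → ℝ := Pi.single i 1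

lemma update_eq (x : Fin 3 → ℝ) (i : Fin 3) (s : ℝ) :
    Function.update x i s = x + (s - x i) • ee i := by
  funext j
  rcases eq_or_ne j i with rfl | h
  · simp [ee]
  · simp [ee, Function.update_of_ne h, Pi.single_eq_of_ne h]

lemma hasDerivAt_update' {f : (Fin 3 → ℝ) → ℝ} {x : Fin 3 → ℝ} {L : (Fin 3 → ℝ) →L[ℝ] ℝ}
    (hf : HasFDerivAt f L x) (i : Fin 3) :
    HasDerivAt (fun s => f (Function.update x i s)) (L (ee i)) (x i) := by
  have h1 : HasDerivAt (fun s : ℝ => x + (s - x i) • ee i) (ee i) (x i) := by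
    simpa using (((hasDerivAt_id (x i)).sub_const (x i)).smul_const (ee i)).const_add x
  have h2 : HasFDerivAt f L (x + ((x i) - x i) • ee i) := by simpa using hf
  have := h2.comp_hasDerivAt (x i) h1
  refine this.congr_of_eventuallyEq (Eventually.of_forall fun s => ?_)
  show f (Function.update x i s) = f (x + (s - x i) • ee i)
  rw [update_eq]

lemma pder_eq_fderiv {f : (Fin 3 → ℝ) → ℝ} {x : Fin 3 → ℝ} {L : (Fin 3 → ℝ) →L[ℝ] ℝ}
    (hf : HasFDerivAt f L x) (i : Fin 3) : pder f i x = L (ee i) :=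
  (hasDerivAt_update' hf i).deriv

lemma lap_eq (v : (Fin 3 → ℝ) → ℝ) (x : Fin 3 → ℝ) :
    lap v x = ∑ j, pder (fun y => pder v j y) j x := by
  unfold lap pder
  refine Finset.sum_congr rfl fun j _ => ?_
  congr 1
  funext s
  simp only [Function.update_idem, Function.update_self]

lemma fderiv_zero_on_open {G F : Type*} [NormedAddCommGroup G] [NormedSpace ℝ G]
    [NormedAddCommGroup F] [NormedSpace ℝ F] {f : G → F} {U : Set G} (hU : IsOpen U)
    (h0 : ∀ y ∈ U, f y = 0) {x : G} (hx : x ∈ U) : fderiv ℝ f x = 0 := by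
  have h : f =ᶠ[nhds x] (fun _ => (0 : F)) := eventually_of_mem (hU.mem_nhds hx) h0
  rw [h.fderiv_eq]
  exact fderiv_const_apply 0

lemma isOpen_V (R : ℝ) : IsOpen {y : Fin 3 → ℝ | R ^ 2 < ∑ i, y i ^ 2} := by
  apply isOpen_lt continuous_const
  exact continuous_finset_sum _ fun i _ => (continuous_apply i).pow 2

lemma sum_sq_of_not_mem_closedBall {R : ℝ} (hR : 0 < R) {x : Fin 3 → ℝ}
    (hx : x ∉ Metric.closedBall (0 : Fin 3 → ℝ) R) : R ^ 2 < ∑ i, x i ^ 2 := by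
  have hne : ¬ ∀ i, |x i| ≤ R := by
    intro hall
    apply hx
    rw [Metric.mem_closedBall, dist_pi_le_iff hR.le]
    intro i
    simpa [Real.dist_eq] using hall i
  push_neg at hne
  obtain ⟨i, hi⟩ := hne
  have h1 : R ^ 2 < x i ^ 2 := by nlinarith [sq_abs (x i)]
  exact h1.trans_le (Finset.single_le_sum (fun j _ => sq_nonneg (x j)) (Finset.mem_univ i))

lemma hasCompactSupport_of {R : ℝ} (hR : 0 < R) {f : (Fin 3 → ℝ) → ℝ}
    (h : ∀ x, R ^ 2 < ∑ i, x i ^ 2 → f x = 0) : HasCompactSupport f := by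
  apply HasCompactSupport.intro (isCompact_closedBall (0 : Fin 3 → ℝ) R)
  intro x hx
  apply h
  have hne : ¬ ∀ i, |x i| ≤ R := by
    intro hall
    apply hx
    rw [Metric.mem_closedBall, dist_pi_le_iff hR.le]
    intro i
    simpa [Real.dist_eq] using hall i
  push_neg at hne
  obtain ⟨i, hi⟩ := hne
  have h1 : R ^ 2 < x i ^ 2 := by nlinarith [sq_abs (x i)]
  exact h1.trans_le (Finset.single_le_sum (fun j _ => sq_nonneg (x j)) (Finset.mem_univ i))

lemma integrable_of {R : ℝ} (hR : 0 < R) {f : (Fin 3 → ℝ) → ℝ} (hc : Continuous f)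
    (h : ∀ x, R ^ 2 < ∑ i, x i ^ 2 → f x = 0) : Integrable f :=
  hc.integrable_of_hasCompactSupport (hasCompactSupport_of hR h)

lemma integral_lineDeriv_eq_zero {h h' : (Fin 3 → ℝ) → ℝ} {v : Fin 3 → ℝ}
    (H : ∀ x, HasLineDerivAt ℝ h (h' x) x v)
    (hint : Integrable h) (hint' : Integrable h') : ∫ x, h' x = 0 := by
  have key := integral_bilinear_hasLineDerivAt_right_eq_neg_left_of_integrable
    (μ := (volume : Measure (Fin 3 → ℝ))) (B := ContinuousLinearMap.mul ℝ ℝ)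
    (f := h) (f' := h') (g := fun _ => (1 : ℝ)) (g' := fun _ => (0 : ℝ)) (v := v)
    (by simpa using hint') (by simpa using (integrable_zero _ ℝ (volume : Measure (Fin 3 → ℝ))))
    (by simpa using hint) (fun x _ => H x) (fun x _ => ((hasFDerivAt_const (1 : ℝ) x).hasLineDerivAt v))
  simpa using key.symm


lemma integral_virial {R : ℝ} (hR : 0 < R) {f : (Fin 3 → ℝ) → ℝ} (hf : ContDiff ℝ 1 f)
    (hs : ∀ x, R ^ 2 < ∑ i, x i ^ 2 → f x = 0) :
    ∫ x : Fin 3 → ℝ, ∑ i, x i * fderiv ℝ f x (ee i) = -3 * ∫ x : Fin 3 → ℝ, f x := by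
  have hfd : ∀ x, HasFDerivAt f (fderiv ℝ f x) x := fun x =>
    (hf.differentiable one_ne_zero x).hasFDerivAt
  have hfc : Continuous f := hf.continuous
  have hDc : Continuous (fderiv ℝ f) := hf.continuous_fderiv one_ne_zero
  have hD0 : ∀ x, R ^ 2 < ∑ i, x i ^ 2 → fderiv ℝ f x = 0 := fun x hx =>
    fderiv_zero_on_open (isOpen_V R) (fun y hy => hs y hy) hx
  have hintf : Integrable f := integrable_of hR hfc hs
  have hterm : ∀ i : Fin 3, Integrable (fun x : Fin 3 → ℝ => x i * fderiv ℝ f x (ee i)) := by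
    intro i
    apply integrable_of hR ((continuous_apply i).mul (hDc.clm_apply continuous_const))
    intro x hx
    simp [hD0 x hx]
  have key : ∀ i : Fin 3,
      (∫ x : Fin 3 → ℝ, f x) + ∫ x : Fin 3 → ℝ, x i * fderiv ℝ f x (ee i) = 0 := by
    intro i
    rw [← integral_add hintf (hterm i)]
    apply integral_lineDeriv_eq_zero (h := fun x => x i * f x) (v := ee i)
    · intro x
      have hproj : HasFDerivAt (fun y : Fin 3 → ℝ => y i)
          (ContinuousLinearMap.proj i : (Fin 3 → ℝ) →L[ℝ] ℝ) x :=
        (ContinuousLinearMap.proj i : (Fin 3 → ℝ) →L[ℝ] ℝ).hasFDerivAt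
      have hmul := (hproj.fun_mul (hfd x)).hasLineDerivAt (ee i)
      convert hmul using 1
      · rfl
      · rfl
      simp [ee, Pi.single_eq_same]
      ring
    · exact integrable_of hR ((continuous_apply i).mul hfc) (fun x hx => by simp [hs x hx])
    · exact hintf.add (hterm i)
  rw [integral_finset_sum _ (fun i _ => hterm i)]
  have hsum : ∀ i : Fin 3, ∫ x : Fin 3 → ℝ, x i * fderiv ℝ f x (ee i) = - ∫ x, f x :=
    fun i => by linarith [key i]
  simp only [hsum, Fin.sum_univ_three]
  ring

lemma virial_sq {R : ℝ} (hR : 0 < R) {f : (Fin 3 → ℝ) → ℝ} (hf : ContDiff ℝ 1 f)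
    (hs : ∀ x, R ^ 2 < ∑ i, x i ^ 2 → f x = 0) :
    ∫ x : Fin 3 → ℝ, (∑ i, x i * fderiv ℝ f x (ee i)) * f x
      = -(3 / 2) * ∫ x : Fin 3 → ℝ, f x ^ 2 := by
  have hfd : ∀ x, HasFDerivAt f (fderiv ℝ f x) x := fun x =>
    (hf.differentiable one_ne_zero x).hasFDerivAt
  have h2 : ContDiff ℝ 1 (fun x => f x ^ 2) := hf.pow 2
  have hD2 : ∀ (x : Fin 3 → ℝ) i, fderiv ℝ (fun y => f y ^ 2) x (ee i)
      = 2 * f x * fderiv ℝ f x (ee i) := by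
    intro x i
    have hsq : HasFDerivAt (fun y => f y ^ 2)
        (f x • fderiv ℝ f x + f x • fderiv ℝ f x) x := by
      have := (hfd x).fun_mul (hfd x)
      refine this.congr_of_eventuallyEq (Eventually.of_forall fun y => ?_)
      ring
    rw [hsq.fderiv]
    simp
    ring
  have hvir := integral_virial hR h2 (fun x hx => by simp [hs x hx])
  have hrw : ∀ x : Fin 3 → ℝ, ∑ i, x i * fderiv ℝ (fun y => f y ^ 2) x (ee i)
      = 2 * ((∑ i, x i * fderiv ℝ f x (ee i)) * f x) := by
    intro x
    simp only [hD2, Fin.sum_univ_three]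
    ring
  simp only [hrw] at hvir
  rw [integral_const_mul] at hvir
  linarith

lemma continuous_abs_rpow (q : ℝ) (hq : 0 ≤ q) : Continuous fun s : ℝ => |s| ^ q :=
  continuous_iff_continuousAt.2 fun s =>
    (Real.continuousAt_rpow_const _ _ (Or.inr hq)).comp continuous_abs.continuousAt

lemma myHasDerivAt_abs_rpow {p : ℝ} (hp : 1 ≤ p) (s : ℝ) :
    HasDerivAt (fun r : ℝ => |r| ^ (p + 1)) ((p + 1) * |s| ^ (p - 1) * s) s := by
  have h := hasDerivAt_abs_rpow s (by linarith : 1 < p + 1)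
  simpa [show p + 1 - 2 = p - 1 by ring] using h

lemma myContDiff_abs_rpow {p : ℝ} (hp : 1 ≤ p) :
    ContDiff ℝ 1 (fun s : ℝ => |s| ^ (p + 1)) := by
  have h := contDiff_norm_rpow (E := ℝ) (p := p + 1) (by linarith)
  simpa [Real.norm_eq_abs] using h

lemma virial_pow {R p : ℝ} (hp : 1 ≤ p) (hR : 0 < R) {f : (Fin 3 → ℝ) → ℝ}
    (hf : ContDiff ℝ 1 f) (hs : ∀ x, R ^ 2 < ∑ i, x i ^ 2 → f x = 0) :
    ∫ x : Fin 3 → ℝ, (∑ i, x i * fderiv ℝ f x (ee i)) * (|f x| ^ (p - 1) * f x)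
      = -(3 / (p + 1)) * ∫ x : Fin 3 → ℝ, |f x| ^ (p + 1) := by
  have hp1 : (0:ℝ) < p + 1 := by linarith
  have hF : ContDiff ℝ 1 (fun x => |f x| ^ (p + 1)) := (myContDiff_abs_rpow hp).comp hf
  have hD : ∀ (x : Fin 3 → ℝ) i, fderiv ℝ (fun y => |f y| ^ (p + 1)) x (ee i)
      = (p + 1) * |f x| ^ (p - 1) * f x * fderiv ℝ f x (ee i) := by
    intro x i
    have h := (myHasDerivAt_abs_rpow hp (f x)).comp_hasFDerivAt x
      (hf.differentiable one_ne_zero x).hasFDerivAt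
    have h' : HasFDerivAt (fun y => |f y| ^ (p + 1))
        (((p + 1) * |f x| ^ (p - 1) * f x) • fderiv ℝ f x) x := h
    rw [h'.fderiv]
    simp [smul_eq_mul]
  have hsF : ∀ x, R ^ 2 < ∑ i, x i ^ 2 → |f x| ^ (p + 1) = 0 := by
    intro x hx
    rw [hs x hx]
    simp [Real.zero_rpow (ne_of_gt hp1)]
  have hvir := integral_virial hR hF hsF
  have hrw : ∀ x : Fin 3 → ℝ, ∑ i, x i * fderiv ℝ (fun y => |f y| ^ (p + 1)) x (ee i)
      = (p + 1) * ((∑ i, x i * fderiv ℝ f x (ee i)) * (|f x| ^ (p - 1) * f x)) := by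
    intro x
    simp only [hD, Fin.sum_univ_three]
    ring
  simp only [hrw] at hvir
  rw [integral_const_mul] at hvir
  have hne : p + 1 ≠ 0 := ne_of_gt hp1
  field_simp
  simp only [mul_assoc] at hvir ⊢
  linarith [hvir]


lemma virial_lap {R : ℝ} (hR : 0 < R) {f : (Fin 3 → ℝ) → ℝ} (hf : ContDiff ℝ 2 f)
    (hs : ∀ x, R ^ 2 < ∑ i, x i ^ 2 → f x = 0) :
    ∫ x : Fin 3 → ℝ, (∑ i, x i * fderiv ℝ f x (ee i))
        * (∑ j, fderiv ℝ (fun y => fderiv ℝ f y (ee j)) x (ee j))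
      = (1 / 2) * ∫ x : Fin 3 → ℝ, (∑ j, (fderiv ℝ f x (ee j)) ^ 2) := by
  set P : Fin 3 → (Fin 3 → ℝ) → ℝ := fun j y => fderiv ℝ f y (ee j) with hPdef
  have hf1 : ContDiff ℝ 1 f := hf.of_le (by norm_num)
  have hfd : ∀ x, HasFDerivAt f (fderiv ℝ f x) x := fun x =>
    (hf1.differentiable one_ne_zero x).hasFDerivAt
  have hfdC : ContDiff ℝ 1 (fderiv ℝ f) := hf.fderiv_right (le_refl 2)
  have hPc : ∀ j, ContDiff ℝ 1 (P j) := fun j => hfdC.clm_apply contDiff_const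
  have hPd : ∀ j (x : Fin 3 → ℝ), HasFDerivAt (P j) (fderiv ℝ (P j) x) x := fun j x =>
    ((hPc j).differentiable one_ne_zero x).hasFDerivAt
  have hf0 : ∀ x, R ^ 2 < ∑ i, x i ^ 2 → fderiv ℝ f x = 0 := fun x hx =>
    fderiv_zero_on_open (isOpen_V R) (fun y hy => hs y hy) hx
  have hP0 : ∀ j x, R ^ 2 < ∑ i, x i ^ 2 → P j x = 0 := by
    intro j x hx
    simp [hPdef, hf0 x hx]
  have hDP0 : ∀ j x, R ^ 2 < ∑ i, x i ^ 2 → fderiv ℝ (P j) x = 0 := fun j x hx =>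
    fderiv_zero_on_open (isOpen_V R) (fun y hy => hP0 j y hy) hx
  -- symmetry of second derivatives
  have hsymm : ∀ (x : Fin 3 → ℝ) (i j : Fin 3),
      fderiv ℝ (P i) x (ee j) = fderiv ℝ (P j) x (ee i) := by
    intro x i j
    have hH : HasFDerivAt (fderiv ℝ f) (fderiv ℝ (fderiv ℝ f) x) x :=
      ((hfdC.differentiable one_ne_zero) x).hasFDerivAt
    have hcomp : ∀ k : Fin 3, fderiv ℝ (P k) x
        = (ContinuousLinearMap.apply ℝ ℝ (ee k)).comp (fderiv ℝ (fderiv ℝ f) x) := by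
      intro k
      have h1 := (ContinuousLinearMap.apply ℝ ℝ (ee k)).hasFDerivAt.comp x hH
      have h2 : HasFDerivAt (P k)
          ((ContinuousLinearMap.apply ℝ ℝ (ee k)).comp (fderiv ℝ (fderiv ℝ f) x)) x := h1
      exact h2.fderiv
    rw [hcomp i, hcomp j]
    simp only [ContinuousLinearMap.coe_comp', Function.comp_apply,
      ContinuousLinearMap.apply_apply]
    exact second_derivative_symmetric hfd hH (ee j) (ee i)
  -- derivative of A
  have hAd : ∀ x : Fin 3 → ℝ, HasFDerivAt (fun y : Fin 3 → ℝ => ∑ i, y i * P i y)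
      (∑ i, (x i • fderiv ℝ (P i) x
        + P i x • (ContinuousLinearMap.proj i : (Fin 3 → ℝ) →L[ℝ] ℝ))) x := by
    intro x
    apply HasFDerivAt.fun_sum
    intro i _
    exact (ContinuousLinearMap.proj i : (Fin 3 → ℝ) →L[ℝ] ℝ).hasFDerivAt.fun_mul (hPd i x)
  have hA : ∀ (x : Fin 3 → ℝ) (j : Fin 3),
      fderiv ℝ (fun y : Fin 3 → ℝ => ∑ i, y i * P i y) x (ee j)
      = P j x + ∑ i, x i * fderiv ℝ (P j) x (ee i) := by
    intro x j
    rw [(hAd x).fderiv]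
    rw [ContinuousLinearMap.sum_apply]
    simp only [ContinuousLinearMap.add_apply, ContinuousLinearMap.coe_smul',
      Pi.smul_apply, smul_eq_mul, ContinuousLinearMap.proj_apply]
    rw [Finset.sum_add_distrib]
    have h1 : ∑ i : Fin 3, P i x * ee j i = P j x := by
      have : ∀ i : Fin 3, P i x * ee j i = if j = i then P i x else 0 := by
        intro i
        rcases eq_or_ne j i with rfl | h
        · simp [ee]
        · simp [ee, Pi.single_eq_of_ne (Ne.symm h), h]
      simp only [this]
      simp
    have h2 : ∑ i : Fin 3, x i * fderiv ℝ (P i) x (ee j)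
        = ∑ i : Fin 3, x i * fderiv ℝ (P j) x (ee i) :=
      Finset.sum_congr rfl fun i _ => by rw [hsymm x i j]
    rw [h1, h2]
    ring
  -- continuity facts
  have hPcont : ∀ j, Continuous (P j) := fun j => (hPc j).continuous
  have hDPcont : ∀ j, Continuous (fun x => fderiv ℝ (P j) x (ee j)) := fun j =>
    (((hPc j).continuous_fderiv one_ne_zero).clm_apply continuous_const)
  have hAc : ContDiff ℝ 1 (fun y : Fin 3 → ℝ => ∑ i, y i * P i y) := by
    apply ContDiff.sum
    intro i _
    exact ((ContinuousLinearMap.proj i : (Fin 3 → ℝ) →L[ℝ] ℝ).contDiff).mul (hPc i)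
  have hAcont : Continuous (fun y : Fin 3 → ℝ => ∑ i, y i * P i y) := hAc.continuous
  have hA0 : ∀ x, R ^ 2 < ∑ i, x i ^ 2 → (∑ i, x i * P i x) = 0 := by
    intro x hx
    simp [hP0 _ x hx]
  have hDA0 : ∀ x, R ^ 2 < ∑ i, x i ^ 2 →
      fderiv ℝ (fun y : Fin 3 → ℝ => ∑ i, y i * P i y) x = 0 := fun x hx =>
    fderiv_zero_on_open (isOpen_V R) (fun y hy => hA0 y hy) hx
  -- integration by parts for each j
  have key : ∀ j : Fin 3, ∫ x : Fin 3 → ℝ, (∑ i, x i * P i x) * fderiv ℝ (P j) x (ee j)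
      = (1 / 2) * ∫ x : Fin 3 → ℝ, P j x ^ 2 := by
    intro j
    have int1 : Integrable (fun x : Fin 3 → ℝ =>
        fderiv ℝ (fun y : Fin 3 → ℝ => ∑ i, y i * P i y) x (ee j) * P j x) := by
      apply integrable_of hR (((hAc.continuous_fderiv one_ne_zero).clm_apply
        continuous_const).mul (hPcont j))
      intro x hx
      simp [hDA0 x hx]
    have int2 : Integrable (fun x : Fin 3 → ℝ =>
        (∑ i, x i * P i x) * fderiv ℝ (P j) x (ee j)) := by
      apply integrable_of hR (hAcont.mul (hDPcont j))
      intro x hx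
      simp [hDP0 j x hx]
    have int3 : Integrable (fun x : Fin 3 → ℝ => (∑ i, x i * P i x) * P j x) := by
      apply integrable_of hR (hAcont.mul (hPcont j))
      intro x hx
      simp [hP0 j x hx]
    have hibp := integral_mul_fderiv_eq_neg_fderiv_mul_of_integrable
      (μ := (volume : Measure (Fin 3 → ℝ)))
      (f := fun y : Fin 3 → ℝ => ∑ i, y i * P i y) (g := P j) (v := ee j)
      int1 int2 int3 (fun x _ => hAc.differentiable one_ne_zero x)
      (fun x _ => (hPc j).differentiable one_ne_zero x)
    rw [hibp]
    have hrw : ∀ x : Fin 3 → ℝ,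
        fderiv ℝ (fun y : Fin 3 → ℝ => ∑ i, y i * P i y) x (ee j) * P j x
        = P j x ^ 2 + (∑ i, x i * fderiv ℝ (P j) x (ee i)) * P j x := by
      intro x
      rw [hA x j]
      ring
    rw [integral_congr_ae (Eventually.of_forall hrw)]
    have intsq : Integrable (fun x : Fin 3 → ℝ => P j x ^ 2) := by
      apply integrable_of hR ((hPcont j).pow 2)
      intro x hx
      simp [hP0 j x hx]
    have intc : Integrable (fun x : Fin 3 → ℝ =>
        (∑ i, x i * fderiv ℝ (P j) x (ee i)) * P j x) := by
      apply integrable_of hR _ _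
      · apply Continuous.mul _ (hPcont j)
        exact continuous_finset_sum _ fun i _ => (continuous_apply i).mul
          ((((hPc j).continuous_fderiv one_ne_zero)).clm_apply continuous_const)
      · intro x hx
        simp [hP0 j x hx]
    rw [integral_add intsq intc]
    rw [virial_sq hR (hPc j) (fun x hx => hP0 j x hx)]
    ring
  -- put everything together
  have hmulsum : ∀ x : Fin 3 → ℝ, (∑ i, x i * P i x)
      * (∑ j, fderiv ℝ (P j) x (ee j))
      = ∑ j, (∑ i, x i * P i x) * fderiv ℝ (P j) x (ee j) := fun x => Finset.mul_sum _ _ _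
  rw [integral_congr_ae (Eventually.of_forall hmulsum)]
  have intj : ∀ j : Fin 3, Integrable (fun x : Fin 3 → ℝ =>
      (∑ i, x i * P i x) * fderiv ℝ (P j) x (ee j)) := by
    intro j
    apply integrable_of hR (hAcont.mul (hDPcont j))
    intro x hx
    simp [hDP0 j x hx]
  rw [integral_finset_sum _ fun j _ => intj j]
  have intsq : ∀ j : Fin 3, Integrable (fun x : Fin 3 → ℝ => P j x ^ 2) := by
    intro j
    apply integrable_of hR ((hPcont j).pow 2)
    intro x hx
    simp [hP0 j x hx]
  rw [integral_finset_sum _ fun j _ => intsq j]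
  rw [Finset.sum_congr rfl fun j _ => key j]
  rw [Finset.mul_sum]


end VirialHelpers

/-- Identity iii) of Lemma 5.3 (virial/Morawetz-type identity) for spatially compactly
supported classical solutions of `∂_t² u = Δu − |u|^{p−1}u` on `ℝ³ × I`:
`d/dt ∫ (x·∇u) ∂_t u = −(3/2)∫(∂_t u)² + (1/2)∫|∇u|² + (3/(p+1))∫|u|^{p+1}`. -/
theorem stmt_15 (p : ℝ) (hp : 1 ≤ p) (I : Set ℝ) (hIo : IsOpen I) (hIc : Convex ℝ I)
    (R : ℝ) (hR : 0 < R)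
    (u : (Fin 3 → ℝ) → ℝ → ℝ)
    (hu : ContDiffOn ℝ 2 (fun q : (Fin 3 → ℝ) × ℝ => u q.1 q.2) (Set.univ ×ˢ I))
    (hpde : ∀ x : Fin 3 → ℝ, ∀ t ∈ I,
      deriv (fun τ => deriv (fun σ => u x σ) τ) t
        = lap (fun y => u y t) x - |u x t| ^ (p - 1) * u x t)
    (hsupp : ∀ t ∈ I, ∀ x : Fin 3 → ℝ, R ^ 2 < ∑ i, x i ^ 2 → u x t = 0) :
    ∀ t ∈ I, HasDerivAt
      (fun τ => ∫ x : Fin 3 → ℝ,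
        (∑ i, x i * pder (fun y => u y τ) i x) * deriv (fun σ => u x σ) τ)
      (-(3 / 2) * (∫ x : Fin 3 → ℝ, (deriv (fun σ => u x σ) t) ^ 2)
        + (1 / 2) * (∫ x : Fin 3 → ℝ, ∑ i, pder (fun y => u y t) i x ^ 2)
        + (3 / (p + 1)) * (∫ x : Fin 3 → ℝ, |u x t| ^ (p + 1))) t := by
  intro t ht
  set w : (Fin 3 → ℝ) × ℝ → ℝ := fun q => u q.1 q.2 with hwdef
  set Ω : Set ((Fin 3 → ℝ) × ℝ) := Set.univ ×ˢ I with hΩdef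
  have hΩ : IsOpen Ω := isOpen_univ.prod hIo
  have hmem : ∀ (x : Fin 3 → ℝ) {τ : ℝ}, τ ∈ I → ((x, τ) ∈ Ω) := fun x {τ} hτ =>
    ⟨Set.mem_univ _, hτ⟩
  have hFd : ∀ q ∈ Ω, HasFDerivAt w (fderiv ℝ w q) q := fun q hq =>
    ((hu.differentiableOn (by norm_num)).differentiableAt (hΩ.mem_nhds hq)).hasFDerivAt
  have hFd1 : ContDiffOn ℝ 1 (fderiv ℝ w) Ω := hu.fderiv_of_isOpen hΩ (by norm_num)
  have hFdc : ContinuousOn (fderiv ℝ w) Ω := hFd1.continuousOn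
  have hGd : ∀ q ∈ Ω, HasFDerivAt (fderiv ℝ w) (fderiv ℝ (fderiv ℝ w) q) q := fun q hq =>
    ((hFd1.differentiableOn one_ne_zero).differentiableAt (hΩ.mem_nhds hq)).hasFDerivAt
  have hGdc : ContinuousOn (fderiv ℝ (fderiv ℝ w)) Ω :=
    hFd1.continuousOn_fderiv_of_isOpen hΩ le_rfl
  -- time derivative = fderiv applied to (0,1)
  have hcurve : ∀ (x : Fin 3 → ℝ) (τ : ℝ),
      HasDerivAt (fun σ : ℝ => ((x, σ) : (Fin 3 → ℝ) × ℝ)) (0, 1) τ := fun x τ =>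
    (hasDerivAt_const τ x).prodMk (hasDerivAt_id τ)
  have hT : ∀ (x : Fin 3 → ℝ) {τ : ℝ}, τ ∈ I →
      HasDerivAt (fun σ => u x σ) (fderiv ℝ w (x, τ) (0, 1)) τ := fun x {τ} hτ =>
    (hFd (x, τ) (hmem x hτ)).comp_hasDerivAt τ (hcurve x τ)
  have hTeq : ∀ (x : Fin 3 → ℝ) {τ : ℝ}, τ ∈ I →
      deriv (fun σ => u x σ) τ = fderiv ℝ w (x, τ) (0, 1) := fun x {τ} hτ => (hT x hτ).deriv
  -- spatial derivative
  have hsp : ∀ (x : Fin 3 → ℝ) {τ : ℝ}, τ ∈ I → HasFDerivAt (fun y => u y τ)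
      ((fderiv ℝ w (x, τ)).comp (ContinuousLinearMap.inl ℝ (Fin 3 → ℝ) ℝ)) x :=
    fun x {τ} hτ => by
      have := (hFd (x, τ) (hmem x hτ)).comp x (hasFDerivAt_prodMk_left (𝕜 := ℝ) x τ)
      exact this
  have hPeq : ∀ (x : Fin 3 → ℝ) (i : Fin 3) {τ : ℝ}, τ ∈ I →
      pder (fun y => u y τ) i x = fderiv ℝ w (x, τ) (ee i, 0) := by
    intro x i τ hτ
    rw [pder_eq_fderiv (hsp x hτ) i]
    simp
  -- time path of the first derivative
  have hFdpath : ∀ (x : Fin 3 → ℝ) {τ : ℝ}, τ ∈ I → ∀ v : (Fin 3 → ℝ) × ℝ,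
      HasDerivAt (fun σ => fderiv ℝ w (x, σ) v)
        (fderiv ℝ (fderiv ℝ w) (x, τ) (0, 1) v) τ := by
    intro x τ hτ v
    have h1 : HasDerivAt (fun σ => fderiv ℝ w (x, σ))
        (fderiv ℝ (fderiv ℝ w) (x, τ) (0, 1)) τ :=
      (hGd (x, τ) (hmem x hτ)).comp_hasDerivAt τ (hcurve x τ)
    have h2 := h1.clm_apply (hasDerivAt_const τ v)
    simpa using h2
  -- the integrand and its time derivative
  set g : ℝ → (Fin 3 → ℝ) → ℝ := fun τ x =>
    (∑ i, x i * fderiv ℝ w (x, τ) (ee i, 0)) * fderiv ℝ w (x, τ) (0, 1) with hgdef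
  set g' : ℝ → (Fin 3 → ℝ) → ℝ := fun τ x =>
    (∑ i, x i * fderiv ℝ (fderiv ℝ w) (x, τ) (0, 1) (ee i, 0)) * fderiv ℝ w (x, τ) (0, 1)
      + (∑ i, x i * fderiv ℝ w (x, τ) (ee i, 0))
        * fderiv ℝ (fderiv ℝ w) (x, τ) (0, 1) (0, 1) with hg'def
  have hgderiv : ∀ (x : Fin 3 → ℝ) {τ : ℝ}, τ ∈ I →
      HasDerivAt (fun σ => g σ x) (g' τ x) τ := by
    intro x τ hτ
    have h1 : HasDerivAt (fun σ => ∑ i, x i * fderiv ℝ w (x, σ) (ee i, 0))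
        (∑ i, x i * fderiv ℝ (fderiv ℝ w) (x, τ) (0, 1) (ee i, 0)) τ :=
      HasDerivAt.fun_sum fun i _ => ((hFdpath x hτ (ee i, 0)).const_mul (x i))
    exact h1.mul (hFdpath x hτ (0, 1))
  -- vanishing outside the ball
  have hVIopen : IsOpen ({y : Fin 3 → ℝ | R ^ 2 < ∑ i, y i ^ 2} ×ˢ I) := (isOpen_V R).prod hIo
  have hFd0 : ∀ (x : Fin 3 → ℝ) {τ : ℝ}, τ ∈ I → R ^ 2 < ∑ i, x i ^ 2 →
      fderiv ℝ w (x, τ) = 0 := by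
    intro x τ hτ hx
    exact fderiv_zero_on_open hVIopen (fun q hq => hsupp q.2 hq.2 q.1 hq.1)
      (Set.mk_mem_prod (show x ∈ {y : Fin 3 → ℝ | R ^ 2 < ∑ i, y i ^ 2} from hx) hτ)
  have hGd0 : ∀ (x : Fin 3 → ℝ) {τ : ℝ}, τ ∈ I → R ^ 2 < ∑ i, x i ^ 2 →
      fderiv ℝ (fderiv ℝ w) (x, τ) = 0 := by
    intro x τ hτ hx
    exact fderiv_zero_on_open hVIopen (fun q hq => hFd0 q.1 hq.2 hq.1)
      (Set.mk_mem_prod (show x ∈ {y : Fin 3 → ℝ | R ^ 2 < ∑ i, y i ^ 2} from hx) hτ)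
  have hg0 : ∀ (x : Fin 3 → ℝ) {τ : ℝ}, τ ∈ I → R ^ 2 < ∑ i, x i ^ 2 → g τ x = 0 := by
    intro x τ hτ hx
    simp [hgdef, hFd0 x hτ hx]
  have hg'0 : ∀ (x : Fin 3 → ℝ) {τ : ℝ}, τ ∈ I → R ^ 2 < ∑ i, x i ^ 2 → g' τ x = 0 := by
    intro x τ hτ hx
    simp [hg'def, hFd0 x hτ hx, hGd0 x hτ hx]
  -- continuity in x
  have hgc : ∀ {τ : ℝ}, τ ∈ I → Continuous (g τ) := by
    intro τ hτ
    have hfx : Continuous (fun x : Fin 3 → ℝ => fderiv ℝ w (x, τ)) :=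
      hFdc.comp_continuous (continuous_id.prodMk continuous_const) (fun x => hmem x hτ)
    exact (continuous_finset_sum _ fun i _ => (continuous_apply i).mul
      (hfx.clm_apply continuous_const)).mul (hfx.clm_apply continuous_const)
  have hg'c : ∀ {τ : ℝ}, τ ∈ I → Continuous (g' τ) := by
    intro τ hτ
    have hfx : Continuous (fun x : Fin 3 → ℝ => fderiv ℝ w (x, τ)) :=
      hFdc.comp_continuous (continuous_id.prodMk continuous_const) (fun x => hmem x hτ)
    have hgx : Continuous (fun x : Fin 3 → ℝ => fderiv ℝ (fderiv ℝ w) (x, τ)) :=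
      hGdc.comp_continuous (continuous_id.prodMk continuous_const) (fun x => hmem x hτ)
    apply Continuous.add
    · exact (continuous_finset_sum _ fun i _ => (continuous_apply i).mul
        (((hgx.clm_apply continuous_const)).clm_apply continuous_const)).mul
        (hfx.clm_apply continuous_const)
    · exact (continuous_finset_sum _ fun i _ => (continuous_apply i).mul
        (hfx.clm_apply continuous_const)).mul
        (((hgx.clm_apply continuous_const)).clm_apply continuous_const)
  -- choose a closed ball of times inside I
  obtain ⟨δ, hδpos, hδI⟩ : ∃ δ > 0, Metric.closedBall t δ ⊆ I :=
    Metric.nhds_basis_closedBall.mem_iff.1 (hIo.mem_nhds ht)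
  -- uniform bound for g' on the ball
  have hKcompact : IsCompact ((Metric.closedBall (0 : Fin 3 → ℝ) R) ×ˢ Metric.closedBall t δ) :=
    (isCompact_closedBall _ _).prod (isCompact_closedBall _ _)
  have hKsub : (Metric.closedBall (0 : Fin 3 → ℝ) R) ×ˢ Metric.closedBall t δ ⊆ Ω := by
    rintro ⟨y, τ⟩ ⟨_, hτ⟩
    exact hmem y (hδI hτ)
  have hG'cont : ContinuousOn (fun q : (Fin 3 → ℝ) × ℝ =>
      (∑ i, q.1 i * fderiv ℝ (fderiv ℝ w) q (0, 1) (ee i, 0)) * fderiv ℝ w q (0, 1)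
      + (∑ i, q.1 i * fderiv ℝ w q (ee i, 0))
        * fderiv ℝ (fderiv ℝ w) q (0, 1) (0, 1)) Ω := by
    apply ContinuousOn.add
    · exact (continuousOn_finset_sum _ fun i _ =>
        (((continuous_apply i).comp continuous_fst).continuousOn).mul
        ((hGdc.clm_apply continuousOn_const).clm_apply continuousOn_const)).mul
        (hFdc.clm_apply continuousOn_const)
    · exact (continuousOn_finset_sum _ fun i _ =>
        (((continuous_apply i).comp continuous_fst).continuousOn).mul
        (hFdc.clm_apply continuousOn_const)).mul
        ((hGdc.clm_apply continuousOn_const).clm_apply continuousOn_const)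
  obtain ⟨C, hC⟩ := hKcompact.exists_bound_of_continuousOn (hG'cont.mono hKsub)
  set bound : (Fin 3 → ℝ) → ℝ :=
    (Metric.closedBall (0 : Fin 3 → ℝ) R).indicator (fun _ => |C|) with hbounddef
  have hbound_int : Integrable bound := by
    rw [hbounddef]
    rw [integrable_indicator_iff measurableSet_closedBall]
    exact integrableOn_const measure_closedBall_lt_top.ne
  have h_bound : ∀ᵐ x : Fin 3 → ℝ, ∀ τ ∈ Metric.ball t δ, ‖g' τ x‖ ≤ bound x := by
    apply Filter.Eventually.of_forall
    intro x τ hτ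
    have hτI : τ ∈ I := hδI (Metric.ball_subset_closedBall hτ)
    by_cases hx : x ∈ Metric.closedBall (0 : Fin 3 → ℝ) R
    · rw [hbounddef, Set.indicator_of_mem hx]
      have := hC (x, τ) ⟨hx, Metric.ball_subset_closedBall hτ⟩
      calc ‖g' τ x‖ ≤ C := this
        _ ≤ |C| := le_abs_self C
    · rw [hbounddef, Set.indicator_of_notMem hx]
      rw [hg'0 x hτI (sum_sq_of_not_mem_closedBall hR hx)]
      simp
  -- differentiate under the integral sign
  have hmeasg : ∀ᶠ τ in nhds t, AEStronglyMeasurable (g τ) volume := by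
    filter_upwards [hIo.mem_nhds ht] with τ hτ
    exact (hgc hτ).aestronglyMeasurable
  have hintg : Integrable (g t) := integrable_of hR (hgc ht) (fun x hx => hg0 x ht hx)
  have hmeasg' : AEStronglyMeasurable (g' t) volume := (hg'c ht).aestronglyMeasurable
  have h_diff : ∀ᵐ x : Fin 3 → ℝ, ∀ τ ∈ Metric.ball t δ,
      HasDerivAt (fun σ => g σ x) (g' τ x) τ := by
    apply Filter.Eventually.of_forall
    intro x τ hτ
    exact hgderiv x (hδI (Metric.ball_subset_closedBall hτ))
  have H := (hasDerivAt_integral_of_dominated_loc_of_deriv_le (Metric.ball_mem_nhds t hδpos) hmeasg hintg hmeasg'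
    h_bound hbound_int h_diff).2
  -- the function in the statement agrees with τ ↦ ∫ g τ near t
  have heqfun : (fun τ => ∫ x : Fin 3 → ℝ,
      (∑ i, x i * pder (fun y => u y τ) i x) * deriv (fun σ => u x σ) τ)
      =ᶠ[nhds t] (fun τ => ∫ x : Fin 3 → ℝ, g τ x) := by
    filter_upwards [hIo.mem_nhds ht] with τ hτ
    refine integral_congr_ae (Filter.Eventually.of_forall fun x => ?_)
    show (∑ i, x i * pder (fun y => u y τ) i x) * deriv (fun σ => u x σ) τ
      = (∑ i, x i * fderiv ℝ w (x, τ) (ee i, 0)) * fderiv ℝ w (x, τ) (0, 1)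
    rw [hTeq x hτ]
    rw [Finset.sum_congr rfl fun i _ => by rw [hPeq x i hτ]]
  have Hstmt := H.congr_of_eventuallyEq heqfun
  -- now identify the value of the derivative
  have hφ : ContDiff ℝ 2 (fun y => u y t) := by
    rw [← contDiffOn_univ]
    exact hu.comp ((contDiff_id.prodMk contDiff_const).contDiffOn) (fun y _ => hmem y ht)
  have hφ1 : ContDiff ℝ 1 (fun y => u y t) := hφ.of_le (by norm_num)
  have hφs : ∀ x, R ^ 2 < ∑ i, x i ^ 2 → u x t = 0 := fun x hx => hsupp t ht x hx
  have hφd : ∀ (x : Fin 3 → ℝ) (i : Fin 3),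
      fderiv ℝ (fun y => u y t) x (ee i) = fderiv ℝ w (x, t) (ee i, 0) := by
    intro x i
    rw [← pder_eq_fderiv ((hφ.differentiable (by norm_num) x).hasFDerivAt) i, hPeq x i ht]
  have hvC : ContDiff ℝ 1 (fun y => fderiv ℝ w (y, t) (0, 1)) := by
    have h1 : ContDiff ℝ 1 (fun y : Fin 3 → ℝ => fderiv ℝ w (y, t)) := by
      rw [← contDiffOn_univ]
      exact hFd1.comp ((contDiff_id.prodMk contDiff_const).contDiffOn) (fun y _ => hmem y ht)
    exact h1.clm_apply contDiff_const
  have hvs : ∀ x, R ^ 2 < ∑ i, x i ^ 2 → fderiv ℝ w (x, t) (0, 1) = 0 := by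
    intro x hx
    rw [hFd0 x ht hx]
    rfl
  have hvd : ∀ (x : Fin 3 → ℝ) (i : Fin 3),
      fderiv ℝ (fun y => fderiv ℝ w (y, t) (0, 1)) x (ee i)
        = fderiv ℝ (fderiv ℝ w) (x, t) (ee i, 0) (0, 1) := by
    intro x i
    have h1 : HasFDerivAt (fun y : Fin 3 → ℝ => fderiv ℝ w (y, t))
        ((fderiv ℝ (fderiv ℝ w) (x, t)).comp (ContinuousLinearMap.inl ℝ (Fin 3 → ℝ) ℝ)) x :=
      (hGd (x, t) (hmem x ht)).comp x (hasFDerivAt_prodMk_left (𝕜 := ℝ) x t)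
    have h2 : HasFDerivAt (fun y => fderiv ℝ w (y, t) (0, 1))
        ((ContinuousLinearMap.apply ℝ ℝ ((0 : Fin 3 → ℝ), (1 : ℝ))).comp
          ((fderiv ℝ (fderiv ℝ w) (x, t)).comp (ContinuousLinearMap.inl ℝ (Fin 3 → ℝ) ℝ))) x :=
      (ContinuousLinearMap.apply ℝ ℝ ((0 : Fin 3 → ℝ), (1 : ℝ))).hasFDerivAt.comp x h1
    rw [h2.fderiv]
    simp
  have hsym : ∀ (x : Fin 3 → ℝ) (a b : (Fin 3 → ℝ) × ℝ),
      fderiv ℝ (fderiv ℝ w) (x, t) a b = fderiv ℝ (fderiv ℝ w) (x, t) b a := by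
    intro x a b
    refine second_derivative_symmetric_of_eventually (f := w) ?_ (hGd (x, t) (hmem x ht)) a b
    filter_upwards [hΩ.mem_nhds (hmem x ht)] with q hq
    exact hFd q hq
  have hpde' : ∀ x : Fin 3 → ℝ, fderiv ℝ (fderiv ℝ w) (x, t) (0, 1) (0, 1)
      = lap (fun y => u y t) x - |u x t| ^ (p - 1) * u x t := by
    intro x
    rw [← hpde x t ht]
    have h1 : (fun τ => deriv (fun σ => u x σ) τ) =ᶠ[nhds t]
        (fun τ => fderiv ℝ w (x, τ) (0, 1)) := by
      filter_upwards [hIo.mem_nhds ht] with τ hτ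
      exact hTeq x hτ
    rw [h1.deriv_eq]
    exact ((hFdpath x ht (0, 1)).deriv).symm
  have hlap : ∀ x : Fin 3 → ℝ, lap (fun y => u y t) x
      = ∑ j, fderiv ℝ (fun y => fderiv ℝ (fun z => u z t) y (ee j)) x (ee j) := by
    intro x
    rw [lap_eq]
    refine Finset.sum_congr rfl fun j _ => ?_
    have hPj : pder (fun y => u y t) j = fun y => fderiv ℝ (fun z => u z t) y (ee j) := by
      funext y
      exact pder_eq_fderiv ((hφ.differentiable (by norm_num) y).hasFDerivAt) j
    rw [hPj]
    exact pder_eq_fderiv ((((hφ.fderiv_right (by norm_num : (1 : WithTop ℕ∞) + 1 ≤ 2)).clm_apply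
      contDiff_const).differentiable one_ne_zero x).hasFDerivAt) j
  have hg't : ∀ x : Fin 3 → ℝ, g' t x
      = (∑ i, x i * fderiv ℝ (fun y => fderiv ℝ w (y, t) (0, 1)) x (ee i))
          * fderiv ℝ w (x, t) (0, 1)
        + ((∑ i, x i * fderiv ℝ (fun y => u y t) x (ee i))
            * (∑ j, fderiv ℝ (fun y => fderiv ℝ (fun z => u z t) y (ee j)) x (ee j))
          - (∑ i, x i * fderiv ℝ (fun y => u y t) x (ee i))
            * (|u x t| ^ (p - 1) * u x t)) := by
    intro x
    have e1 : ∀ i : Fin 3, fderiv ℝ (fderiv ℝ w) (x, t) (0, 1) (ee i, 0)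
        = fderiv ℝ (fun y => fderiv ℝ w (y, t) (0, 1)) x (ee i) := by
      intro i
      rw [hsym x (0, 1) (ee i, 0)]
      exact (hvd x i).symm
    have e2 : ∀ i : Fin 3, fderiv ℝ w (x, t) (ee i, 0)
        = fderiv ℝ (fun y => u y t) x (ee i) := fun i => (hφd x i).symm
    show (∑ i, x i * fderiv ℝ (fderiv ℝ w) (x, t) (0, 1) (ee i, 0)) * fderiv ℝ w (x, t) (0, 1)
      + (∑ i, x i * fderiv ℝ w (x, t) (ee i, 0))
        * fderiv ℝ (fderiv ℝ w) (x, t) (0, 1) (0, 1) = _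
    rw [hpde' x, hlap x]
    simp only [e1, e2]
    ring
  -- integrability of the three pieces
  have hφd0 : ∀ x, R ^ 2 < ∑ i, x i ^ 2 → fderiv ℝ (fun y => u y t) x = 0 := fun x hx =>
    fderiv_zero_on_open (isOpen_V R) (fun y hy => hφs y hy) hx
  have int1 : Integrable (fun x : Fin 3 → ℝ =>
      (∑ i, x i * fderiv ℝ (fun y => fderiv ℝ w (y, t) (0, 1)) x (ee i))
        * fderiv ℝ w (x, t) (0, 1)) := by
    apply integrable_of hR
    · exact (continuous_finset_sum _ fun i _ => (continuous_apply i).mul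
        ((hvC.continuous_fderiv one_ne_zero).clm_apply continuous_const)).mul hvC.continuous
    · intro x hx
      simp [hvs x hx]
  have int2 : Integrable (fun x : Fin 3 → ℝ =>
      (∑ i, x i * fderiv ℝ (fun y => u y t) x (ee i))
        * (∑ j, fderiv ℝ (fun y => fderiv ℝ (fun z => u z t) y (ee j)) x (ee j))) := by
    apply integrable_of hR
    · refine Continuous.mul ?_ ?_
      · exact continuous_finset_sum _ fun i _ => (continuous_apply i).mul
          ((hφ1.continuous_fderiv one_ne_zero).clm_apply continuous_const)
      · exact continuous_finset_sum _ fun j _ =>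
          ((((hφ.fderiv_right (by norm_num : (1 : WithTop ℕ∞) + 1 ≤ 2)).clm_apply
            contDiff_const).continuous_fderiv one_ne_zero)).clm_apply continuous_const
    · intro x hx
      simp [hφd0 x hx]
  have int3 : Integrable (fun x : Fin 3 → ℝ =>
      (∑ i, x i * fderiv ℝ (fun y => u y t) x (ee i))
        * (|u x t| ^ (p - 1) * u x t)) := by
    apply integrable_of hR
    · refine Continuous.mul ?_ ?_
      · exact continuous_finset_sum _ fun i _ => (continuous_apply i).mul
          ((hφ1.continuous_fderiv one_ne_zero).clm_apply continuous_const)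
      · exact ((continuous_abs_rpow (p - 1) (by linarith)).comp hφ1.continuous).mul
          hφ1.continuous
    · intro x hx
      simp [hφd0 x hx]
  have hsplit : ∫ x : Fin 3 → ℝ, g' t x
      = (∫ x : Fin 3 → ℝ, (∑ i, x i * fderiv ℝ (fun y => fderiv ℝ w (y, t) (0, 1)) x (ee i))
          * fderiv ℝ w (x, t) (0, 1))
        + ((∫ x : Fin 3 → ℝ, (∑ i, x i * fderiv ℝ (fun y => u y t) x (ee i))
            * (∑ j, fderiv ℝ (fun y => fderiv ℝ (fun z => u z t) y (ee j)) x (ee j)))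
          - (∫ x : Fin 3 → ℝ, (∑ i, x i * fderiv ℝ (fun y => u y t) x (ee i))
            * (|u x t| ^ (p - 1) * u x t))) := by
    have int23 : Integrable (fun x : Fin 3 → ℝ =>
        (∑ i, x i * fderiv ℝ (fun y => u y t) x (ee i))
          * (∑ j, fderiv ℝ (fun y => fderiv ℝ (fun z => u z t) y (ee j)) x (ee j))
        - (∑ i, x i * fderiv ℝ (fun y => u y t) x (ee i))
          * (|u x t| ^ (p - 1) * u x t)) := int2.sub int3
    rw [integral_congr_ae (Filter.Eventually.of_forall hg't)]
    rw [integral_add int1 int23]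
    rw [integral_sub int2 int3]
  have S1 : ∫ x : Fin 3 → ℝ, (∑ i, x i * fderiv ℝ (fun y => fderiv ℝ w (y, t) (0, 1)) x (ee i))
      * fderiv ℝ w (x, t) (0, 1)
      = -(3 / 2) * ∫ x : Fin 3 → ℝ, (fderiv ℝ w (x, t) (0, 1)) ^ 2 :=
    virial_sq hR hvC hvs
  have S2 : ∫ x : Fin 3 → ℝ, (∑ i, x i * fderiv ℝ (fun y => u y t) x (ee i))
      * (∑ j, fderiv ℝ (fun y => fderiv ℝ (fun z => u z t) y (ee j)) x (ee j))
      = (1 / 2) * ∫ x : Fin 3 → ℝ, (∑ j, (fderiv ℝ (fun y => u y t) x (ee j)) ^ 2) :=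
    virial_lap hR hφ hφs
  have S3 : ∫ x : Fin 3 → ℝ, (∑ i, x i * fderiv ℝ (fun y => u y t) x (ee i))
      * (|u x t| ^ (p - 1) * u x t)
      = -(3 / (p + 1)) * ∫ x : Fin 3 → ℝ, |u x t| ^ (p + 1) :=
    virial_pow hp hR hφ1 hφs
  have r1 : ∫ x : Fin 3 → ℝ, (deriv (fun σ => u x σ) t) ^ 2
      = ∫ x : Fin 3 → ℝ, (fderiv ℝ w (x, t) (0, 1)) ^ 2 :=
    integral_congr_ae (Filter.Eventually.of_forall fun x =>
      show (deriv (fun σ => u x σ) t) ^ 2 = (fderiv ℝ w (x, t) (0, 1)) ^ 2 by rw [hTeq x ht])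
  have r2 : ∫ x : Fin 3 → ℝ, (∑ i, pder (fun y => u y t) i x ^ 2)
      = ∫ x : Fin 3 → ℝ, (∑ i, (fderiv ℝ (fun y => u y t) x (ee i)) ^ 2) :=
    integral_congr_ae (Filter.Eventually.of_forall fun x =>
      show (∑ i, pder (fun y => u y t) i x ^ 2)
          = ∑ i, (fderiv ℝ (fun y => u y t) x (ee i)) ^ 2 from
        Finset.sum_congr rfl fun i _ => by rw [hPeq x i ht, ← hφd x i])
  convert Hstmt using 1
  · rfl
  · rfl
  rw [hsplit, S1, S2, S3, r1, r2]
  ring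
end

section
/- Let p > 3 and set a = 2/(p−1), m = (p−1)/2. Let w : (0,∞) × ℝ → ℝ be twice continuously differentiable, set u(r,t) = w(r,t)/r, and assume ∂_t² w − ∂_r² w = −r |u|^{p−1} u on (0,∞) × ℝ. Assume that there is a nonincreasing function g₁ : (0,∞) → [0,∞) with |u(r,t)| ≤ g₁(r) r^{−a} for all r > 0 and t ∈ ℝ, and that there is a nonincreasing function G : (0,∞) → [0,∞) with G(r) → 0 as r → ∞ such that (∫_r^{4r} |∂_r w(s,t) + ∂_t w(s,t)|^m ds)^{1/m} ≤ G(r) for all r > 0 and t ∈ ℝ. Then there is a constant C_p > 0, depending only on p, such that for all r > 0 and t ∈ ℝ: (∫_r^{4r} |∂_r w(s,t) + ∂_t w(s,t)|^m ds)^{1/m} ≤ C_p g₁(r)^p. -/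
open MeasureTheory

lemma aux_hasDerivAt_fst {E : Type*} [NormedAddCommGroup E] [NormedSpace ℝ E]
    (F : ℝ × ℝ → E) {L : ℝ × ℝ →L[ℝ] E} {s t : ℝ} (h : HasFDerivAt F L (s, t)) :
    HasDerivAt (fun ρ => F (ρ, t)) (L (1, 0)) s := by
  have := h.comp_hasDerivAt s ((hasDerivAt_id s).prodMk (hasDerivAt_const s t))
  exact this

lemma aux_hasDerivAt_snd {E : Type*} [NormedAddCommGroup E] [NormedSpace ℝ E]
    (F : ℝ × ℝ → E) {L : ℝ × ℝ →L[ℝ] E} {s t : ℝ} (h : HasFDerivAt F L (s, t)) :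
    HasDerivAt (fun σ => F (s, σ)) (L (0, 1)) t := by
  have := h.comp_hasDerivAt t ((hasDerivAt_const t s).prodMk (hasDerivAt_id t))
  exact this

lemma aux_hasDerivAt_diag {E : Type*} [NormedAddCommGroup E] [NormedSpace ℝ E]
    (F : ℝ × ℝ → E) {L : ℝ × ℝ →L[ℝ] E} {r₀ t₀ x : ℝ} (h : HasFDerivAt F L (r₀ + x, t₀ - x)) :
    HasDerivAt (fun y => F (r₀ + y, t₀ - y)) (L (1, -1)) x := by
  have h1 : HasDerivAt (fun y : ℝ => r₀ + y) 1 x := (hasDerivAt_id x).const_add r₀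
  have h2 : HasDerivAt (fun y : ℝ => t₀ - y) (-1) x := by
    simpa using (hasDerivAt_id x).const_sub t₀
  have := h.comp_hasDerivAt x (h1.prodMk h2)
  exact this

lemma aux_rpow_sub_add {x : ℝ} (hx : 0 ≤ x) {p : ℝ} (hp : 1 < p) :
    x ^ (p - 1) * x = x ^ p := by
  rcases eq_or_lt_of_le hx with h | h
  · rw [← h, Real.zero_rpow (by linarith), Real.zero_rpow (by linarith), mul_zero]
  · nth_rw 2 [← Real.rpow_one x]
    rw [← Real.rpow_add h]; norm_num

lemma aux_rpow_add_le {x y c : ℝ} (hx : 0 ≤ x) (hy : 0 ≤ y) (hc : 0 ≤ c) (hc1 : c ≤ 1) :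
    (x + y) ^ c ≤ x ^ c + y ^ c := by
  lift x to NNReal using hx
  lift y to NNReal using hy
  have := NNReal.rpow_add_le_add_rpow x y hc hc1
  exact_mod_cast this

lemma aux_add_rpow_le {x y c : ℝ} (hx : 0 ≤ x) (hy : 0 ≤ y) (hc : 0 ≤ c) :
    (x + y) ^ c ≤ 2 ^ c * (x ^ c + y ^ c) := by
  have hmax : x + y ≤ 2 * max x y := by
    rcases le_total x y with h | h
    · simp [max_eq_right h]; linarith
    · simp [max_eq_left h]; linarith
  calc (x + y) ^ c ≤ (2 * max x y) ^ c :=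
        Real.rpow_le_rpow (by linarith) hmax hc
    _ = 2 ^ c * (max x y) ^ c := Real.mul_rpow (by norm_num) (le_max_of_le_left hx)
    _ ≤ 2 ^ c * (x ^ c + y ^ c) := by
        gcongr
        rcases le_total x y with h | h
        · rw [max_eq_right h]
          exact le_add_of_nonneg_left (Real.rpow_nonneg hx c)
        · rw [max_eq_left h]
          exact le_add_of_nonneg_right (Real.rpow_nonneg hy c)

/-- Lemma 3.11 (estimate (3.12)) in abstract form: with `p > 3`, `a = 2/(p−1)`,
`m = (p−1)/2`, there is a constant `C = C(p)` such that whenever `w` solves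
`∂_t² w − ∂_r² w = −r|u|^{p−1}u` on `(0,∞) × ℝ` with `u = w/r`, `|u(r,t)| ≤ g₁(r) r^{−a}`
with `g₁` nonincreasing and nonnegative, and the `L^m` norms of `∂_r w + ∂_t w` on
`(r,4r)` are bounded by a nonincreasing function `G(r) → 0`, then those `L^m` norms are
in fact bounded by `C g₁(r)^p`. -/
theorem stmt_17 (p a m : ℝ) (hp : 3 < p) (ha : a = 2 / (p - 1)) (hm : m = (p - 1) / 2) :
    ∃ C > (0 : ℝ), ∀ w u : ℝ → ℝ → ℝ,
      ContDiffOn ℝ 2 (Function.uncurry w) (Set.Ioi (0 : ℝ) ×ˢ Set.univ) →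
      (∀ r t : ℝ, u r t = w r t / r) →
      (∀ r ∈ Set.Ioi (0 : ℝ), ∀ t : ℝ,
        deriv (fun σ => deriv (fun σ' => w r σ') σ) t
          - deriv (fun ρ => deriv (fun ρ' => w ρ' t) ρ) r
          = -(r * |u r t| ^ (p - 1) * u r t)) →
      ∀ g₁ G : ℝ → ℝ,
      (∀ r > (0 : ℝ), 0 ≤ g₁ r) →
      (∀ r s : ℝ, 0 < r → r ≤ s → g₁ s ≤ g₁ r) →
      (∀ r > (0 : ℝ), ∀ t : ℝ, |u r t| ≤ g₁ r * r ^ (-a)) →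
      (∀ r > (0 : ℝ), 0 ≤ G r) →
      (∀ r s : ℝ, 0 < r → r ≤ s → G s ≤ G r) →
      Filter.Tendsto G Filter.atTop (nhds 0) →
      (∀ r > (0 : ℝ), ∀ t : ℝ,
        (∫ s in Set.Ioc r (4 * r),
          |deriv (fun ρ => w ρ t) s + deriv (fun σ => w s σ) t| ^ m) ^ (1 / m) ≤ G r) →
      ∀ r > (0 : ℝ), ∀ t : ℝ,
        (∫ s in Set.Ioc r (4 * r),
          |deriv (fun ρ => w ρ t) s + deriv (fun σ => w s σ) t| ^ m) ^ (1 / m)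
          ≤ C * g₁ r ^ p := by
  have hp1 : (0:ℝ) < p - 1 := by linarith
  have ha0 : 0 < a := by rw [ha]; positivity
  have hm1 : 1 < m := by rw [hm]; linarith
  have hm0 : 0 < m := by linarith
  have ham : a * m = 1 := by rw [ha, hm]; field_simp
  have hap : a * p = a + 2 := by rw [ha]; field_simp; ring
  have hlog4 : 0 < Real.log 4 := Real.log_pos (by norm_num)
  refine ⟨2 * Real.log 4 ^ (1 / m) / a, by positivity, ?_⟩
  intro w u hw hu hPDE g₁ G hg₁0 hg₁mono hub hG0 hGmono hGlim hGb r hr t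
  set F : ℝ × ℝ → ℝ := Function.uncurry w with hF
  set U : Set (ℝ × ℝ) := Set.Ioi (0 : ℝ) ×ˢ Set.univ with hUdef
  have hUopen : IsOpen U := isOpen_Ioi.prod isOpen_univ
  have hmemU : ∀ s : ℝ, 0 < s → ∀ τ : ℝ, (s, τ) ∈ U := fun s hs τ => ⟨hs, trivial⟩
  have hFat : ∀ s : ℝ, 0 < s → ∀ τ : ℝ, ContDiffAt ℝ 2 F (s, τ) := fun s hs τ =>
    hw.contDiffAt (hUopen.mem_nhds (hmemU s hs τ))
  have hFdiff : ∀ s : ℝ, 0 < s → ∀ τ : ℝ, DifferentiableAt ℝ F (s, τ) := fun s hs τ =>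
    (hFat s hs τ).differentiableAt two_ne_zero
  have hF'diff : ∀ s : ℝ, 0 < s → ∀ τ : ℝ, DifferentiableAt ℝ (fderiv ℝ F) (s, τ) :=
    fun s hs τ => ((hFat s hs τ).fderiv_right (m := 1) (le_refl 2)).differentiableAt one_ne_zero
  set P : ℝ × ℝ → ℝ := fun q => fderiv ℝ F q (1, 1) with hPdef
  -- first partials
  have hd1 : ∀ s : ℝ, 0 < s → ∀ τ : ℝ,
      HasDerivAt (fun ρ => w ρ τ) (fderiv ℝ F (s, τ) (1, 0)) s := fun s hs τ =>
    aux_hasDerivAt_fst F (hFdiff s hs τ).hasFDerivAt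
  have hd2 : ∀ s : ℝ, 0 < s → ∀ τ : ℝ,
      HasDerivAt (fun σ => w s σ) (fderiv ℝ F (s, τ) (0, 1)) τ := fun s hs τ =>
    aux_hasDerivAt_snd F (hFdiff s hs τ).hasFDerivAt
  have hveq : ∀ s : ℝ, 0 < s → ∀ τ : ℝ,
      deriv (fun ρ => w ρ τ) s + deriv (fun σ => w s σ) τ = P (s, τ) := by
    intro s hs τ
    rw [(hd1 s hs τ).deriv, (hd2 s hs τ).deriv, hPdef, ← map_add]
    norm_num
  -- second partials and key travelling derivative
  have hkey : ∀ s : ℝ, 0 < s → ∀ τ : ℝ,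
      fderiv ℝ (fderiv ℝ F) (s, τ) (1, -1) (1, 1)
        = s * |u s τ| ^ (p - 1) * u s τ := by
    intro s hs τ
    set L2 := fderiv ℝ (fderiv ℝ F) (s, τ) with hL2
    have hf'' : HasFDerivAt (fderiv ℝ F) L2 (s, τ) := (hF'diff s hs τ).hasFDerivAt
    have hcomp2 : HasFDerivAt (fun q => fderiv ℝ F q (0, 1))
        ((ContinuousLinearMap.apply ℝ ℝ ((0:ℝ), (1:ℝ))).comp L2) (s, τ) :=
      (ContinuousLinearMap.apply ℝ ℝ ((0:ℝ), (1:ℝ))).hasFDerivAt.comp _ hf''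
    have hinner2 : (fun σ => deriv (fun σ' => w s σ') σ)
        = fun σ => fderiv ℝ F (s, σ) (0, 1) :=
      funext fun σ => (hd2 s hs σ).deriv
    have hdtt : deriv (fun σ => deriv (fun σ' => w s σ') σ) τ = L2 (0, 1) (0, 1) := by
      rw [hinner2]
      exact (aux_hasDerivAt_snd _ hcomp2).deriv
    have hcomp1 : HasFDerivAt (fun q => fderiv ℝ F q (1, 0))
        ((ContinuousLinearMap.apply ℝ ℝ ((1:ℝ), (0:ℝ))).comp L2) (s, τ) :=
      (ContinuousLinearMap.apply ℝ ℝ ((1:ℝ), (0:ℝ))).hasFDerivAt.comp _ hf''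
    have hinner1 : (fun ρ => deriv (fun ρ' => w ρ' τ) ρ)
        =ᶠ[nhds s] fun ρ => fderiv ℝ F (ρ, τ) (1, 0) := by
      filter_upwards [isOpen_Ioi.mem_nhds hs] with ρ hρ
      exact (hd1 ρ hρ τ).deriv
    have hdrr : deriv (fun ρ => deriv (fun ρ' => w ρ' τ) ρ) s = L2 (1, 0) (1, 0) := by
      rw [hinner1.deriv_eq]
      exact (aux_hasDerivAt_fst _ hcomp1).deriv
    have hsymm : L2 (1, 0) (0, 1) = L2 (0, 1) (1, 0) :=
      (hFat s hs τ).isSymmSndFDerivAt (by simp) _ _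
    have hpde := hPDE s hs τ
    rw [hdtt, hdrr] at hpde
    have e1 : ((1:ℝ), (-1:ℝ)) = ((1:ℝ), (0:ℝ)) - ((0:ℝ), (1:ℝ)) := by norm_num
    have e2 : ((1:ℝ), (1:ℝ)) = ((1:ℝ), (0:ℝ)) + ((0:ℝ), (1:ℝ)) := by norm_num
    have expand : L2 (1, -1) (1, 1)
        = L2 (1, 0) (1, 0) + L2 (1, 0) (0, 1) - L2 (0, 1) (1, 0) - L2 (0, 1) (0, 1) := by
      rw [e1, e2, map_sub, ContinuousLinearMap.sub_apply, map_add, map_add]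
      ring
    rw [expand, hsymm]
    linarith [hpde]
  have hφ : ∀ r₀ : ℝ, ∀ t₀ x : ℝ, 0 < r₀ + x →
      HasDerivAt (fun y => P (r₀ + y, t₀ - y))
        ((r₀ + x) * |u (r₀ + x) (t₀ - x)| ^ (p - 1) * u (r₀ + x) (t₀ - x)) x := by
    intro r₀ t₀ x hx
    have hf'' := (hF'diff _ hx _).hasFDerivAt (x := (r₀ + x, t₀ - x))
    have hcomp :
        HasFDerivAt P ((ContinuousLinearMap.apply ℝ ℝ ((1:ℝ), (1:ℝ))).comp
          (fderiv ℝ (fderiv ℝ F) (r₀ + x, t₀ - x))) (r₀ + x, t₀ - x) :=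
      (ContinuousLinearMap.apply ℝ ℝ ((1:ℝ), (1:ℝ))).hasFDerivAt.comp _ hf''
    have := aux_hasDerivAt_diag P hcomp
    rw [show ((ContinuousLinearMap.apply ℝ ℝ ((1:ℝ), (1:ℝ))).comp
          (fderiv ℝ (fderiv ℝ F) (r₀ + x, t₀ - x))) (1, -1)
        = fderiv ℝ (fderiv ℝ F) (r₀ + x, t₀ - x) (1, -1) (1, 1) from rfl,
      hkey _ hx _] at this
    exact this
  -- continuity
  have hPcont : ContinuousOn P U := by
    have h1 : ContinuousOn (fderiv ℝ F) U :=
      hw.continuousOn_fderiv_of_isOpen hUopen one_le_two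
    exact (ContinuousLinearMap.apply ℝ ℝ ((1:ℝ), (1:ℝ))).continuous.comp_continuousOn h1
  have hucont : ContinuousOn (fun q : ℝ × ℝ => u q.1 q.2) U := by
    have : (fun q : ℝ × ℝ => u q.1 q.2) = fun q : ℝ × ℝ => F q / q.1 := by
      funext q; rw [hu]; rfl
    rw [this]
    exact hw.continuousOn.div continuousOn_fst (fun q hq => ne_of_gt hq.1)
  -- pointwise estimate via characteristics
  have hpoint : ∀ T : ℝ, 0 ≤ T → ∀ s : ℝ, r ≤ s → ∀ t' : ℝ,
      |P (s, t')| ≤ |P (s + T, t' - T)| + g₁ r ^ p / a * s ^ (-a) := by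
    intro T hT s hs t'
    have hs0 : 0 < s := lt_of_lt_of_le hr hs
    set h : ℝ → ℝ :=
      fun y => (s + y) * |u (s + y) (t' - y)| ^ (p - 1) * u (s + y) (t' - y) with hh
    have hhd : ∀ y ∈ Set.uIcc 0 T, HasDerivAt (fun y => P (s + y, t' - y)) (h y) y := by
      intro y hy
      rw [Set.uIcc_of_le hT] at hy
      exact hφ s t' y (by linarith [hy.1])
    have hline : Continuous (fun y : ℝ => ((s + y, t' - y) : ℝ × ℝ)) :=
      (continuous_const.add continuous_id).prodMk (continuous_const.sub continuous_id)
    have hmaps : ∀ y ∈ Set.uIcc 0 T, ((s + y, t' - y) : ℝ × ℝ) ∈ U := by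
      intro y hy
      rw [Set.uIcc_of_le hT] at hy
      exact hmemU _ (by linarith [hy.1]) _
    have hcont_u : ContinuousOn (fun y => u (s + y) (t' - y)) (Set.uIcc 0 T) :=
      hucont.comp hline.continuousOn hmaps
    have hcont_h : ContinuousOn h (Set.uIcc 0 T) := by
      refine ContinuousOn.mul (ContinuousOn.mul ?_ ?_) hcont_u
      · exact (continuous_const.add continuous_id).continuousOn
      · exact hcont_u.abs.rpow_const (fun y _ => Or.inr (by linarith))
    have hint_h : IntervalIntegrable h volume 0 T := hcont_h.intervalIntegrable
    have hftc : ∫ y in (0:ℝ)..T, h y = P (s + T, t' - T) - P (s, t') := by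
      have := intervalIntegral.integral_eq_sub_of_hasDerivAt hhd hint_h
      simpa using this
    set g : ℝ → ℝ := fun y => g₁ r ^ p * (s + y) ^ (-a - 1) with hg
    have hbound : ∀ y ∈ Set.uIoc 0 T, |h y| ≤ g y := by
      intro y hy
      rw [Set.uIoc_of_le hT] at hy
      have hρ : 0 < s + y := by linarith [hy.1]
      have hρr : r ≤ s + y := by linarith [hy.1]
      have hub1 : |u (s + y) (t' - y)| ≤ g₁ r * (s + y) ^ (-a) :=
        le_trans (hub _ hρ _) (mul_le_mul_of_nonneg_right
          (hg₁mono r (s + y) hr hρr) (Real.rpow_nonneg hρ.le _))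
      have habs : |h y| = (s + y) * (|u (s + y) (t' - y)| ^ (p - 1) * |u (s + y) (t' - y)|) := by
        rw [hh, abs_mul, abs_mul, abs_of_pos hρ,
          abs_of_nonneg (Real.rpow_nonneg (abs_nonneg _) _), mul_assoc]
      rw [habs, aux_rpow_sub_add (abs_nonneg _) (by linarith : 1 < p)]
      have h2 : |u (s + y) (t' - y)| ^ p ≤ (g₁ r * (s + y) ^ (-a)) ^ p :=
        Real.rpow_le_rpow (abs_nonneg _) hub1 (by linarith)
      have h3 : (g₁ r * (s + y) ^ (-a)) ^ p = g₁ r ^ p * (s + y) ^ (-a * p) := by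
        rw [Real.mul_rpow (hg₁0 r hr) (Real.rpow_nonneg hρ.le _), ← Real.rpow_mul hρ.le]
      calc (s + y) * |u (s + y) (t' - y)| ^ p
          ≤ (s + y) * (g₁ r ^ p * (s + y) ^ (-a * p)) := by
            exact mul_le_mul_of_nonneg_left (h3 ▸ h2) hρ.le
        _ = g₁ r ^ p * ((s + y) ^ (1:ℝ) * (s + y) ^ (-a * p)) := by
            rw [Real.rpow_one]; ring
        _ = g₁ r ^ p * (s + y) ^ (-a - 1) := by
            rw [← Real.rpow_add hρ, show (1 : ℝ) + -a * p = -a - 1 by linarith [hap]]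
    have hint_g : IntervalIntegrable g volume 0 T := by
      apply ContinuousOn.intervalIntegrable
      apply ContinuousOn.mul continuousOn_const
      apply ContinuousOn.rpow_const (continuous_const.add continuous_id).continuousOn
      intro y hy
      rw [Set.uIcc_of_le hT] at hy
      exact Or.inl (ne_of_gt (show (0:ℝ) < s + y by linarith [hy.1]))
    have hnorm : |∫ y in (0:ℝ)..T, h y| ≤ |∫ y in (0:ℝ)..T, g y| := by
      have := intervalIntegral.norm_integral_le_abs_of_norm_le (μ := volume) (f := h)
        (a := 0) (b := T)
        ((ae_restrict_iff' measurableSet_uIoc).mpr (Filter.Eventually.of_forall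
          (fun y hy => by simpa [Real.norm_eq_abs] using hbound y hy))) hint_g
      simpa [Real.norm_eq_abs] using this
    have hΦ : ∀ y ∈ Set.uIcc 0 T,
        HasDerivAt (fun y => -(s + y) ^ (-a) / a) ((s + y) ^ (-a - 1)) y := by
      intro y hy
      rw [Set.uIcc_of_le hT] at hy
      have hρ : 0 < s + y := by linarith [hy.1]
      have h0 : HasDerivAt (fun x : ℝ => x ^ (-a)) (-a * (s + y) ^ (-a - 1)) (s + y) :=
        Real.hasDerivAt_rpow_const (Or.inl (ne_of_gt hρ))
      have h1 : HasDerivAt (fun y : ℝ => (s + y) ^ (-a)) (-a * (s + y) ^ (-a - 1) * 1) y :=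
        h0.comp y ((hasDerivAt_id y).const_add s)
      have h2 := h1.neg.div_const a
      refine h2.congr_deriv ?_
      rw [div_eq_iff ha0.ne']; ring
    have hint_pow : IntervalIntegrable (fun y => (s + y) ^ (-a - 1)) volume 0 T := by
      apply ContinuousOn.intervalIntegrable
      apply ContinuousOn.rpow_const (continuous_const.add continuous_id).continuousOn
      intro y hy
      rw [Set.uIcc_of_le hT] at hy
      exact Or.inl (ne_of_gt (show (0:ℝ) < s + y by linarith [hy.1]))
    have hgI : ∫ y in (0:ℝ)..T, (s + y) ^ (-a - 1)
        = -(s + T) ^ (-a) / a - -(s + 0) ^ (-a) / a :=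
      intervalIntegral.integral_eq_sub_of_hasDerivAt hΦ hint_pow
    have hmono_pow : (s + T) ^ (-a) ≤ s ^ (-a) :=
      Real.rpow_le_rpow_of_nonpos hs0 (by linarith) (by linarith)
    have hgval : |∫ y in (0:ℝ)..T, g y| ≤ g₁ r ^ p / a * s ^ (-a) := by
      have hIeq : ∫ y in (0:ℝ)..T, g y
          = g₁ r ^ p * ((s ^ (-a) - (s + T) ^ (-a)) / a) := by
        rw [hg, intervalIntegral.integral_const_mul, hgI, add_zero]
        ring
      have hTa : 0 ≤ (s + T) ^ (-a) := Real.rpow_nonneg (by linarith) _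
      have hg1p : 0 ≤ g₁ r ^ p := Real.rpow_nonneg (hg₁0 r hr) _
      rw [hIeq, abs_of_nonneg (mul_nonneg hg1p
        (div_nonneg (sub_nonneg.mpr hmono_pow) ha0.le))]
      calc g₁ r ^ p * ((s ^ (-a) - (s + T) ^ (-a)) / a)
          ≤ g₁ r ^ p * (s ^ (-a) / a) := by
            refine mul_le_mul_of_nonneg_left ?_ hg1p
            exact (div_le_div_iff_of_pos_right ha0).mpr (by linarith)
        _ = g₁ r ^ p / a * s ^ (-a) := by ring
    have hPeq : P (s, t') = P (s + T, t' - T) - ∫ y in (0:ℝ)..T, h y := by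
      rw [hftc]; ring
    calc |P (s, t')| = |P (s + T, t' - T) - ∫ y in (0:ℝ)..T, h y| := by rw [hPeq]
      _ ≤ |P (s + T, t' - T)| + |∫ y in (0:ℝ)..T, h y| := abs_sub _ _
      _ ≤ |P (s + T, t' - T)| + g₁ r ^ p / a * s ^ (-a) :=
          add_le_add_right (le_trans hnorm hgval) _
  set K : ℝ := g₁ r ^ p / a with hK
  have hg1p : 0 ≤ g₁ r ^ p := Real.rpow_nonneg (hg₁0 r hr) _
  have hK0 : 0 ≤ K := div_nonneg hg1p ha0.le
  have hIcong : ∀ t' c d : ℝ, 0 < c →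
      (∫ s in Set.Ioc c d, |deriv (fun ρ => w ρ t') s + deriv (fun σ => w s σ) t'| ^ m)
      = ∫ s in Set.Ioc c d, |P (s, t')| ^ m := by
    intro t' c d hc
    refine setIntegral_congr_fun measurableSet_Ioc (fun s hs' => ?_)
    rw [hveq s (lt_trans hc hs'.1) t']
  have hcontPm : ∀ t' c d : ℝ, 0 < c →
      ContinuousOn (fun s : ℝ => |P (s, t')| ^ m) (Set.Icc c d) := by
    intro t' c d hc
    have hline : Continuous (fun s : ℝ => ((s, t') : ℝ × ℝ)) :=
      continuous_id.prodMk continuous_const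
    have hmaps : Set.MapsTo (fun s : ℝ => ((s, t') : ℝ × ℝ)) (Set.Icc c d) U :=
      fun s hs' => hmemU _ (lt_of_lt_of_le hc hs'.1) _
    exact ((hPcont.comp hline.continuousOn hmaps).abs).rpow_const (fun s _ => Or.inr hm0.le)
  have hintPm : ∀ t' c d : ℝ, 0 < c →
      IntegrableOn (fun s : ℝ => |P (s, t')| ^ m) (Set.Ioc c d) :=
    fun t' c d hc => ((hcontPm t' c d hc).integrableOn_Icc).mono_set Set.Ioc_subset_Icc_self
  have hnnint : ∀ t' c d : ℝ, 0 ≤ ∫ s in Set.Ioc c d, |P (s, t')| ^ m := fun t' c d =>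
    setIntegral_nonneg measurableSet_Ioc (fun s _ => Real.rpow_nonneg (abs_nonneg _) _)
  have hmain : ∀ T : ℝ, 0 ≤ T →
      (∫ s in Set.Ioc r (4 * r),
          |deriv (fun ρ => w ρ t) s + deriv (fun σ => w s σ) t| ^ m) ^ (1 / m)
        ≤ 2 * G (r + T) + 2 * Real.log 4 ^ (1 / m) / a * g₁ r ^ p := by
    intro T hT
    set R := r + T with hR
    have hR0 : 0 < R := by positivity
    have hintshift : IntegrableOn (fun s : ℝ => |P (s + T, t - T)| ^ m) (Set.Ioc r (4 * r)) := by
      have h1 : IntervalIntegrable (fun s : ℝ => |P (s, t - T)| ^ m) volume (r + T) (4 * r + T) :=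
        (intervalIntegrable_iff_integrableOn_Ioc_of_le (by linarith)).mpr
          (hintPm (t - T) (r + T) (4 * r + T) (by linarith))
      have h2 := h1.comp_add_right T
      rw [add_sub_cancel_right, add_sub_cancel_right] at h2
      exact (intervalIntegrable_iff_integrableOn_Ioc_of_le (by linarith)).mp h2
    have hcontK : ContinuousOn (fun s : ℝ => (K * s ^ (-a)) ^ m) (Set.Icc r (4 * r)) := by
      refine ContinuousOn.rpow_const ?_ (fun s _ => Or.inr hm0.le)
      refine continuousOn_const.mul ?_
      exact ContinuousOn.rpow_const continuousOn_id
        (fun s hs' => Or.inl (ne_of_gt (lt_of_lt_of_le hr hs'.1)))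
    have hintK : IntegrableOn (fun s : ℝ => (K * s ^ (-a)) ^ m) (Set.Ioc r (4 * r)) :=
      (hcontK.integrableOn_Icc).mono_set Set.Ioc_subset_Icc_self
    have hptw : ∀ s ∈ Set.Ioc r (4 * r),
        |P (s, t)| ^ m ≤ 2 ^ m * (|P (s + T, t - T)| ^ m + (K * s ^ (-a)) ^ m) := by
      intro s hs'
      have hs0 : 0 < s := lt_trans hr hs'.1
      calc |P (s, t)| ^ m ≤ (|P (s + T, t - T)| + K * s ^ (-a)) ^ m :=
            Real.rpow_le_rpow (abs_nonneg _) (hpoint T hT s hs'.1.le t) hm0.le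
        _ ≤ 2 ^ m * (|P (s + T, t - T)| ^ m + (K * s ^ (-a)) ^ m) :=
            aux_add_rpow_le (abs_nonneg _)
              (mul_nonneg hK0 (Real.rpow_nonneg hs0.le _)) hm0.le
    have hInt1 : (∫ s in Set.Ioc r (4 * r), |P (s, t)| ^ m)
        ≤ 2 ^ m * ((∫ s in Set.Ioc r (4 * r), |P (s + T, t - T)| ^ m)
            + ∫ s in Set.Ioc r (4 * r), (K * s ^ (-a)) ^ m) := by
      calc (∫ s in Set.Ioc r (4 * r), |P (s, t)| ^ m)
          ≤ ∫ s in Set.Ioc r (4 * r),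
              2 ^ m * (|P (s + T, t - T)| ^ m + (K * s ^ (-a)) ^ m) :=
            setIntegral_mono_on (hintPm t r (4 * r) hr)
              ((hintshift.add hintK).const_mul _) measurableSet_Ioc hptw
        _ = 2 ^ m * ((∫ s in Set.Ioc r (4 * r), |P (s + T, t - T)| ^ m)
              + ∫ s in Set.Ioc r (4 * r), (K * s ^ (-a)) ^ m) := by
            rw [MeasureTheory.integral_const_mul, integral_add hintshift hintK]
    have hKvalue : (∫ s in Set.Ioc r (4 * r), (K * s ^ (-a)) ^ m) = K ^ m * Real.log 4 := by
      have hcong : Set.EqOn (fun s : ℝ => (K * s ^ (-a)) ^ m)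
          (fun s : ℝ => K ^ m * s⁻¹) (Set.Ioc r (4 * r)) := by
        intro s hs'
        have hs0 : 0 < s := lt_trans hr hs'.1
        simp only
        rw [Real.mul_rpow hK0 (Real.rpow_nonneg hs0.le _), ← Real.rpow_mul hs0.le,
          show -a * m = -1 by linarith [ham], Real.rpow_neg_one]
      rw [setIntegral_congr_fun measurableSet_Ioc hcong, MeasureTheory.integral_const_mul]
      congr 1
      rw [← intervalIntegral.integral_of_le (by linarith : r ≤ 4 * r),
        integral_inv_of_pos hr (by linarith)]
      rw [show (4 * r) / r = 4 by field_simp]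
    have hA : (∫ s in Set.Ioc r (4 * r), |P (s + T, t - T)| ^ m)
        ≤ ∫ s in Set.Ioc R (4 * R), |P (s, t - T)| ^ m := by
      have e1 : (∫ s in Set.Ioc r (4 * r), |P (s + T, t - T)| ^ m)
          = ∫ s in Set.Ioc (r + T) (4 * r + T), |P (s, t - T)| ^ m := by
        rw [← intervalIntegral.integral_of_le (by linarith : r ≤ 4 * r),
          ← intervalIntegral.integral_of_le (by linarith : r + T ≤ 4 * r + T),
          intervalIntegral.integral_comp_add_right (fun s => |P (s, t - T)| ^ m) T]
      rw [e1]
      refine setIntegral_mono_set (hintPm (t - T) R (4 * R) hR0)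
        (Filter.Eventually.of_forall (fun s => Real.rpow_nonneg (abs_nonneg _) _)) ?_
      exact HasSubset.Subset.eventuallyLE (Set.Ioc_subset_Ioc (le_refl R) (by rw [hR]; linarith))
    have hGR : (∫ s in Set.Ioc R (4 * R), |P (s, t - T)| ^ m) ^ (1 / m) ≤ G R := by
      rw [← hIcong (t - T) R (4 * R) hR0]
      exact hGb R hR0 (t - T)
    have hnnA : 0 ≤ ∫ s in Set.Ioc R (4 * R), |P (s, t - T)| ^ m := hnnint _ _ _
    rw [hIcong t r (4 * r) hr]
    have h1m : 0 < 1 / m := by positivity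
    have h1m1 : 1 / m ≤ 1 := by rw [div_le_one hm0]; linarith
    calc (∫ s in Set.Ioc r (4 * r), |P (s, t)| ^ m) ^ (1 / m)
        ≤ (2 ^ m * ((∫ s in Set.Ioc R (4 * R), |P (s, t - T)| ^ m)
            + K ^ m * Real.log 4)) ^ (1 / m) := by
          refine Real.rpow_le_rpow (hnnint _ _ _) ?_ h1m.le
          refine le_trans hInt1 ?_
          refine mul_le_mul_of_nonneg_left ?_ (by positivity)
          rw [hKvalue]
          exact add_le_add_left hA _
      _ = 2 * ((∫ s in Set.Ioc R (4 * R), |P (s, t - T)| ^ m)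
            + K ^ m * Real.log 4) ^ (1 / m) := by
          rw [Real.mul_rpow (by positivity) (by positivity),
            ← Real.rpow_mul (by norm_num : (0:ℝ) ≤ 2), mul_one_div, div_self hm0.ne',
            Real.rpow_one]
      _ ≤ 2 * ((∫ s in Set.Ioc R (4 * R), |P (s, t - T)| ^ m) ^ (1 / m)
            + (K ^ m * Real.log 4) ^ (1 / m)) := by
          refine mul_le_mul_of_nonneg_left ?_ (by norm_num)
          exact aux_rpow_add_le hnnA (by positivity) h1m.le h1m1
      _ ≤ 2 * (G R + K * Real.log 4 ^ (1 / m)) := by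
          refine mul_le_mul_of_nonneg_left ?_ (by norm_num)
          refine add_le_add hGR (le_of_eq ?_)
          rw [Real.mul_rpow (by positivity) hlog4.le, ← Real.rpow_mul hK0,
            mul_one_div, div_self hm0.ne', Real.rpow_one]
      _ = 2 * G (r + T) + 2 * Real.log 4 ^ (1 / m) / a * g₁ r ^ p := by
          rw [hK, hR]; ring
  have hlim : Filter.Tendsto
      (fun T : ℝ => 2 * G (r + T) + 2 * Real.log 4 ^ (1 / m) / a * g₁ r ^ p)
      Filter.atTop (nhds (2 * 0 + 2 * Real.log 4 ^ (1 / m) / a * g₁ r ^ p)) := by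
    refine Filter.Tendsto.add_const _ ?_
    refine Filter.Tendsto.const_mul 2 ?_
    exact hGlim.comp (Filter.tendsto_atTop_add_const_left Filter.atTop r Filter.tendsto_id)
  have hfin := ge_of_tendsto hlim (Filter.eventually_atTop.mpr ⟨0, fun T hT => hmain T hT⟩)
  calc (∫ s in Set.Ioc r (4 * r),
      |deriv (fun ρ => w ρ t) s + deriv (fun σ => w s σ) t| ^ m) ^ (1 / m)
      ≤ 2 * 0 + 2 * Real.log 4 ^ (1 / m) / a * g₁ r ^ p := hfin
    _ = 2 * Real.log 4 ^ (1 / m) / a * g₁ r ^ p := by ring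
end

section
/- Let p ≥ 5 and let u : ℝ³ × [0,1) → ℝ be twice continuously differentiable and satisfy ∂_t² u = Δu − |u|^{p−1}u on ℝ³ × (0,1) (Δ the Laplacian in the space variable). Suppose that for every t ∈ [0,1), u(·,t) and ∂_t u(·,t) vanish outside the ball {|x| ≤ 1−t}, and that there exist q > 2, r > p+1 and A > 0 such that for all t ∈ [0,1): ‖∇u(·,t)‖_{L^q(ℝ³)} + ‖∂_t u(·,t)‖_{L^q(ℝ³)} + ‖u(·,t)‖_{L^r(ℝ³)} ≤ A. Then u ≡ 0. -/
open MeasureTheory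
open scoped ENNReal NNReal Topology

set_option maxHeartbeats 1000000

section aux

lemma abs_rpow_hasDerivAt {p : ℝ} (hp : 5 ≤ p) (s : ℝ) :
    HasDerivAt (fun y : ℝ => |y| ^ (p + 1)) ((p + 1) * |s| ^ (p - 1) * s) s := by
  have hc : (1 : ℝ) ≤ (p + 1) / 2 := by linarith
  have hs : HasDerivAt (fun y : ℝ => y ^ 2) (2 * s) s := by
    simpa using (hasDerivAt_pow 2 s)
  have h1 : HasDerivAt (fun y : ℝ => (y ^ 2) ^ ((p + 1) / 2))
      ((p + 1) / 2 * (s ^ 2) ^ ((p + 1) / 2 - 1) * (2 * s)) s :=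
    by have h := (Real.hasDerivAt_rpow_const (x := s ^ 2) (p := (p + 1) / 2) (Or.inr hc)).comp s hs; exact h
  have habs : ∀ y : ℝ, (y ^ 2 : ℝ) ^ ((p + 1) / 2) = |y| ^ (p + 1) := by
    intro y
    rw [← sq_abs, ← Real.rpow_natCast |y| 2, ← Real.rpow_mul (abs_nonneg y)]
    norm_num [mul_div_cancel₀]
  have h2 : ((p + 1) / 2 * (s ^ 2) ^ ((p + 1) / 2 - 1) * (2 * s))
      = (p + 1) * |s| ^ (p - 1) * s := by
    have h3 : (s ^ 2 : ℝ) ^ ((p + 1) / 2 - 1) = |s| ^ (p - 1) := by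
      rw [← sq_abs, ← Real.rpow_natCast |s| 2, ← Real.rpow_mul (abs_nonneg s)]
      congr 1; ring
    rw [h3]; ring
  have := h1.congr_of_eventuallyEq (Filter.Eventually.of_forall fun y => (habs y).symm)
  rwa [h2] at this

lemma sq_le_sum {x : Fin 3 → ℝ} (j : Fin 3) : x j ^ 2 ≤ ∑ i, x i ^ 2 :=
  Finset.single_le_sum (f := fun i => x i ^ 2) (fun i _ => sq_nonneg _) (Finset.mem_univ j)

lemma integral_div_zero (v : (Fin 3 → ℝ) → Fin 3 → ℝ)
    (v' : (Fin 3 → ℝ) → (Fin 3 → ℝ) →L[ℝ] (Fin 3 → ℝ))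
    (hd : ∀ x, HasFDerivAt v (v' x) x)
    (hc : Continuous fun x => ∑ i, v' x (Pi.single i 1) i)
    (hsupp : ∀ x : Fin 3 → ℝ, 1 < ∑ i, x i ^ 2 → v x = 0) :
    ∫ x, ∑ i, v' x (Pi.single i 1) i = 0 := by
  have hopen : IsOpen {y : Fin 3 → ℝ | 1 < ∑ i, y i ^ 2} :=
    isOpen_lt continuous_const (by continuity)
  have hv' : ∀ x : Fin 3 → ℝ, 1 < ∑ i, x i ^ 2 → v' x = 0 := by
    intro x hx
    have hev : v =ᶠ[nhds x] (fun _ => (0 : Fin 3 → ℝ)) := by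
      filter_upwards [hopen.mem_nhds hx] with y hy using hsupp y hy
    have h1 : fderiv ℝ v x = v' x := (hd x).fderiv
    have h2 : fderiv ℝ v x = fderiv ℝ (fun _ : Fin 3 → ℝ => (0 : Fin 3 → ℝ)) x :=
      hev.fderiv_eq
    rw [← h1, h2, fderiv_fun_const]; rfl
  set a : Fin 3 → ℝ := fun _ => (-2 : ℝ)
  set b : Fin 3 → ℝ := fun _ => (2 : ℝ)
  have hle : a ≤ b := fun i => by norm_num [a, b]
  have key := MeasureTheory.integral_divergence_of_hasFDerivAt_off_countable
    (n := 2) a b hle v v' ∅ Set.countable_empty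
    (fun x _ => (hd x).continuousAt.continuousWithinAt)
    (fun x _ => hd x)
    ((hc.continuousOn).integrableOn_compact isCompact_Icc)
  have hfaces : ∀ (i : Fin 3) (c : ℝ), 1 < |c| →
      ∀ y : Fin 2 → ℝ, v (Fin.insertNth i c y) i = 0 := by
    intro i c hcl y
    have : 1 < ∑ j, (Fin.insertNth i c y : Fin 3 → ℝ) j ^ 2 := by
      calc (1:ℝ) < |c| ^ 2 := by nlinarith [abs_nonneg c]
      _ = (Fin.insertNth i c y : Fin 3 → ℝ) i ^ 2 := by
            rw [Fin.insertNth_apply_same, sq_abs]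
      _ ≤ _ := sq_le_sum i
    rw [hsupp _ this]; rfl
  have hz : ∀ x : Fin 3 → ℝ, x ∉ Set.Icc a b → ∑ i, v' x (Pi.single i 1) i = 0 := by
    intro x hx
    have : 1 < ∑ i, x i ^ 2 := by
      rw [Set.mem_Icc, not_and_or] at hx
      rcases hx with hx | hx
      · rw [Pi.le_def, not_forall] at hx
        obtain ⟨j, hj⟩ := hx
        have : (2:ℝ) < |x j| := by
          rw [not_le] at hj; rw [abs_of_neg (by dsimp [a] at hj; linarith)]
          dsimp [a] at hj; linarith
        calc (1:ℝ) < |x j| ^ 2 := by nlinarith [abs_nonneg (x j)]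
        _ = x j ^ 2 := sq_abs _
        _ ≤ _ := sq_le_sum j
      · rw [Pi.le_def, not_forall] at hx
        obtain ⟨j, hj⟩ := hx
        have : (2:ℝ) < |x j| := by
          rw [not_le] at hj
          rw [abs_of_pos (by dsimp [b] at hj; linarith)]
          dsimp [b] at hj; linarith
        calc (1:ℝ) < |x j| ^ 2 := by nlinarith [abs_nonneg (x j)]
        _ = x j ^ 2 := sq_abs _
        _ ≤ _ := sq_le_sum j
    rw [hv' x this]
    simp
  rw [← MeasureTheory.setIntegral_eq_integral_of_forall_compl_eq_zero hz, key]
  apply Finset.sum_eq_zero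
  intro i _
  have hf : ∀ y : Fin 2 → ℝ, v (Fin.insertNth i (b i) y) i = 0 :=
    hfaces i (b i) (by norm_num [b])
  have hb : ∀ y : Fin 2 → ℝ, v (Fin.insertNth i (a i) y) i = 0 :=
    hfaces i (a i) (by norm_num [a])
  simp only [hf, hb, integral_zero, sub_self]

lemma holder_helper {f : (Fin 3 → ℝ) → ℝ} (hf : AEStronglyMeasurable f volume)
    {a b A : ℝ} (ha : 0 < a) (hab : a ≤ b) (hA : 0 < A)
    {S : Set (Fin 3 → ℝ)} (hSfin : volume S ≠ ⊤)
    (hsupp : ∀ x ∉ S, f x = 0)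
    (hbd : eLpNorm f (ENNReal.ofReal b) volume ≤ ENNReal.ofReal A) :
    ∫ x, |f x| ^ a ≤ A ^ a * (volume S).toReal ^ (1 - a / b) := by
  have hb : 0 < b := ha.trans_le hab
  set ν := volume.restrict S with hν
  have hfν : AEStronglyMeasurable f ν := hf.restrict
  have hmeas : AEStronglyMeasurable (fun x => |f x| ^ a) ν :=
    (hfν.norm.aemeasurable.pow_const a).aestronglyMeasurable.congr
      (Filter.Eventually.of_forall fun x => by simp [Real.norm_eq_abs])
  have h1 : ∫ x, |f x| ^ a = ∫ x, |f x| ^ a ∂ν := by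
    rw [hν]
    exact (setIntegral_eq_integral_of_forall_compl_eq_zero fun x hx => by
      rw [hsupp x hx, abs_zero, Real.zero_rpow ha.ne']).symm
  have h2 : ∫ x, |f x| ^ a ∂ν = (∫⁻ x, (‖f x‖₊ : ℝ≥0∞) ^ a ∂ν).toReal := by
    rw [integral_eq_lintegral_of_nonneg_ae
      (Filter.Eventually.of_forall fun x => Real.rpow_nonneg (abs_nonneg _) a) hmeas]
    congr 1
    apply lintegral_congr
    intro x
    rw [← enorm_eq_nnnorm, Real.enorm_eq_ofReal_abs, ← ENNReal.ofReal_rpow_of_nonneg (abs_nonneg _) ha.le]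
  have h3 : ∫⁻ x, (‖f x‖₊ : ℝ≥0∞) ^ a ∂ν = (eLpNorm f (ENNReal.ofReal a) ν) ^ a := by
    rw [eLpNorm_eq_lintegral_rpow_enorm_toReal (by simpa using ha) ENNReal.ofReal_ne_top,
      ENNReal.toReal_ofReal ha.le, one_div, ← ENNReal.rpow_mul,
      inv_mul_cancel₀ ha.ne', ENNReal.rpow_one]
    rfl
  have h4 : eLpNorm f (ENNReal.ofReal a) ν
      ≤ ENNReal.ofReal A * (volume S) ^ (1 / a - 1 / b) := by
    have := eLpNorm_le_eLpNorm_mul_rpow_measure_univ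
      (p := ENNReal.ofReal a) (q := ENNReal.ofReal b)
      (ENNReal.ofReal_le_ofReal hab) hfν
    rw [ENNReal.toReal_ofReal ha.le, ENNReal.toReal_ofReal hb.le,
      show ν Set.univ = volume S from by rw [hν, Measure.restrict_apply_univ]] at this
    exact this.trans (mul_le_mul_left
      ((eLpNorm_mono_measure f Measure.restrict_le_self).trans hbd) _)
  have hexp : 0 ≤ 1 - a / b := by
    rw [sub_nonneg]; exact div_le_one_of_le₀ hab hb.le
  have h5 : (eLpNorm f (ENNReal.ofReal a) ν) ^ a
      ≤ (ENNReal.ofReal A) ^ a * (volume S) ^ (1 - a / b) := by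
    calc (eLpNorm f (ENNReal.ofReal a) ν) ^ a
        ≤ (ENNReal.ofReal A * (volume S) ^ (1 / a - 1 / b)) ^ a :=
          ENNReal.rpow_le_rpow h4 ha.le
      _ = (ENNReal.ofReal A) ^ a * (volume S) ^ (1 - a / b) := by
          rw [ENNReal.mul_rpow_of_nonneg _ _ ha.le, ← ENNReal.rpow_mul,
            show (1 / a - 1 / b) * a = 1 - a / b from by field_simp]
  have hfin : (ENNReal.ofReal A) ^ a * (volume S) ^ (1 - a / b) ≠ ⊤ :=
    ENNReal.mul_ne_top (ENNReal.rpow_ne_top_of_nonneg ha.le ENNReal.ofReal_ne_top)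
      (ENNReal.rpow_ne_top_of_nonneg hexp hSfin)
  rw [h1, h2, h3]
  calc ((eLpNorm f (ENNReal.ofReal a) ν) ^ a).toReal
      ≤ ((ENNReal.ofReal A) ^ a * (volume S) ^ (1 - a / b)).toReal :=
        ENNReal.toReal_mono hfin h5
    _ = A ^ a * (volume S).toReal ^ (1 - a / b) := by
        rw [ENNReal.toReal_mul, ← ENNReal.toReal_rpow, ← ENNReal.toReal_rpow,
          ENNReal.toReal_ofReal hA.le]

end aux

/-- The self-similar rigidity argument of Proposition 5.4: a classical solution of
`∂_t² u = Δu − |u|^{p−1}u` on `ℝ³ × (0,1)`, `p ≥ 5`, with `u(·,t)` and `∂_t u(·,t)`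
supported in `{|x| ≤ 1−t}` for `t ∈ [0,1)`, and uniformly bounded in
`L^q × L^q × L^r` (for `∇u`, `∂_t u`, `u`) with `q > 2`, `r > p+1`, vanishes
identically. -/
theorem stmt_19 (p : ℝ) (hp : 5 ≤ p)
    (u : (Fin 3 → ℝ) → ℝ → ℝ)
    (hu : ContDiffOn ℝ 2 (fun z : (Fin 3 → ℝ) × ℝ => u z.1 z.2)
      (Set.univ ×ˢ Set.Ico (0 : ℝ) 1))
    (hpde : ∀ x : Fin 3 → ℝ, ∀ t ∈ Set.Ioo (0 : ℝ) 1,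
      deriv (fun τ => deriv (fun σ => u x σ) τ) t
        = lap (fun y => u y t) x - |u x t| ^ (p - 1) * u x t)
    (hsupp : ∀ t ∈ Set.Ico (0 : ℝ) 1, ∀ x : Fin 3 → ℝ, (1 - t) ^ 2 < ∑ i, x i ^ 2 →
      u x t = 0 ∧ deriv (fun σ => u x σ) t = 0)
    (q r A : ℝ) (hq : 2 < q) (hr : p + 1 < r) (hA : 0 < A)
    (hbd : ∀ t ∈ Set.Ico (0 : ℝ) 1,
      eLpNorm (fun x : Fin 3 → ℝ =>
          Real.sqrt (∑ i, pder (fun y => u y t) i x ^ 2)) (ENNReal.ofReal q) volume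
        + eLpNorm (fun x : Fin 3 → ℝ => deriv (fun σ => u x σ) t) (ENNReal.ofReal q) volume
        + eLpNorm (fun x : Fin 3 → ℝ => u x t) (ENNReal.ofReal r) volume
        ≤ ENNReal.ofReal A) :
    ∀ x : Fin 3 → ℝ, ∀ t ∈ Set.Ico (0 : ℝ) 1, u x t = 0 := by
  have hp1 : (0:ℝ) < p + 1 := by linarith
  set U : (Fin 3 → ℝ) × ℝ → ℝ := fun z => u z.1 z.2 with hUdef
  set Ω : Set ((Fin 3 → ℝ) × ℝ) := Set.univ ×ˢ Set.Ioo (0:ℝ) 1 with hΩdef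
  have hΩ : IsOpen Ω := isOpen_univ.prod isOpen_Ioo
  have hmem : ∀ (x : Fin 3 → ℝ) {t : ℝ}, t ∈ Set.Ioo (0:ℝ) 1 → (x, t) ∈ Ω :=
    fun x t ht => ⟨Set.mem_univ x, ht⟩
  have hUΩ : ContDiffOn ℝ 2 U Ω :=
    hu.mono (Set.prod_mono_right Set.Ioo_subset_Ico_self)
  have hUat : ∀ (x : Fin 3 → ℝ) {t : ℝ}, t ∈ Set.Ioo (0:ℝ) 1 → ContDiffAt ℝ 2 U (x, t) :=
    fun x t ht => hUΩ.contDiffAt (hΩ.mem_nhds (hmem x ht))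
  set D : (Fin 3 → ℝ) × ℝ → ((Fin 3 → ℝ) × ℝ) →L[ℝ] ℝ := fderiv ℝ U with hDdef
  set D2 : (Fin 3 → ℝ) × ℝ → ((Fin 3 → ℝ) × ℝ) →L[ℝ] ((Fin 3 → ℝ) × ℝ) →L[ℝ] ℝ := fderiv ℝ D with hD2def
  set eV : Fin 3 → (Fin 3 → ℝ) × ℝ := fun i => (Pi.single i 1, 0) with heV
  set eT : (Fin 3 → ℝ) × ℝ := (0, 1) with heT
  have hDcont : ContinuousOn D Ω := hUΩ.continuousOn_fderiv_of_isOpen hΩ one_le_two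
  have hD1 : ContDiffOn ℝ 1 D Ω := hUΩ.fderiv_of_isOpen hΩ (by norm_num)
  have hD2cont : ContinuousOn D2 Ω := hD1.continuousOn_fderiv_of_isOpen hΩ le_rfl
  have hUdiff : ∀ (x : Fin 3 → ℝ) {t : ℝ}, t ∈ Set.Ioo (0:ℝ) 1 → DifferentiableAt ℝ U (x, t) :=
    fun x t ht => (hUat x ht).differentiableAt two_ne_zero
  have hDdiff : ∀ (x : Fin 3 → ℝ) {t : ℝ}, t ∈ Set.Ioo (0:ℝ) 1 → DifferentiableAt ℝ D (x, t) :=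
    fun x t ht => ((hUat x ht).fderiv_right (m := 1) (by norm_num)).differentiableAt one_ne_zero
  have hcurveT : ∀ (x : Fin 3 → ℝ) (t : ℝ), HasDerivAt (fun σ : ℝ => ((x, σ) : (Fin 3 → ℝ) × ℝ)) eT t :=
    fun x t => (hasDerivAt_const t x).prodMk (hasDerivAt_id t)
  have hcurveV : ∀ (x : Fin 3 → ℝ) (i : Fin 3) (t : ℝ) (s : ℝ),
      HasDerivAt (fun s' : ℝ => ((Function.update x i s', t) : (Fin 3 → ℝ) × ℝ)) (eV i) s :=
    fun x i t s => (hasDerivAt_update x i s).prodMk (hasDerivAt_const s t)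
  have hw : ∀ (x : Fin 3 → ℝ) {t : ℝ}, t ∈ Set.Ioo (0:ℝ) 1 →
      HasDerivAt (fun σ => u x σ) (D (x, t) eT) t :=
    fun x t ht => (hUdiff x ht).hasFDerivAt.comp_hasDerivAt t (hcurveT x t)
  have hg : ∀ (x : Fin 3 → ℝ) (i : Fin 3) {t : ℝ}, t ∈ Set.Ioo (0:ℝ) 1 → ∀ s : ℝ,
      HasDerivAt (fun s' => u (Function.update x i s') t)
        (D (Function.update x i s, t) (eV i)) s :=
    fun x i t ht s =>
      by have h := (hUdiff (Function.update x i s) ht).hasFDerivAt.comp_hasDerivAt s (hcurveV x i t s); exact h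
  have hgx : ∀ (x : Fin 3 → ℝ) (i : Fin 3) {t : ℝ}, t ∈ Set.Ioo (0:ℝ) 1 →
      HasDerivAt (fun s' => u (Function.update x i s') t) (D (x, t) (eV i)) (x i) := by
    intro x i t ht
    have := hg x i ht (x i)
    rwa [Function.update_eq_self] at this
  have hpder : ∀ (x : Fin 3 → ℝ) (i : Fin 3) {t : ℝ}, t ∈ Set.Ioo (0:ℝ) 1 →
      pder (fun y => u y t) i x = D (x, t) (eV i) :=
    fun x i t ht => (hgx x i ht).deriv
  have hDT : ∀ (x : Fin 3 → ℝ) (c : (Fin 3 → ℝ) × ℝ) {t : ℝ}, t ∈ Set.Ioo (0:ℝ) 1 →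
      HasDerivAt (fun σ => D (x, σ) c) (D2 (x, t) eT c) t :=
    fun x c t ht =>
      (ContinuousLinearMap.apply ℝ ℝ c).hasFDerivAt.comp_hasDerivAt t
        ((hDdiff x ht).hasFDerivAt.comp_hasDerivAt t (hcurveT x t))
  have hDV : ∀ (x : Fin 3 → ℝ) (i : Fin 3) (c : (Fin 3 → ℝ) × ℝ) {t : ℝ}, t ∈ Set.Ioo (0:ℝ) 1 → ∀ s : ℝ,
      HasDerivAt (fun s' => D (Function.update x i s', t) c)
        (D2 (Function.update x i s, t) (eV i) c) s :=
    fun x i c t ht s =>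
      (ContinuousLinearMap.apply ℝ ℝ c).hasFDerivAt.comp_hasDerivAt s
        ((hDdiff (Function.update x i s) ht).hasFDerivAt.comp_hasDerivAt s (hcurveV x i t s))
  have hSchwarz : ∀ (x : Fin 3 → ℝ) {t : ℝ}, t ∈ Set.Ioo (0:ℝ) 1 → ∀ v w : (Fin 3 → ℝ) × ℝ,
      D2 (x, t) v w = D2 (x, t) w v :=
    fun x t ht v w => (hUat x ht).isSymmSndFDerivAt (by simp) v w
  -- the PDE in terms of the second Fréchet derivative
  have hutt : ∀ (x : Fin 3 → ℝ) {t : ℝ}, t ∈ Set.Ioo (0:ℝ) 1 →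
      D2 (x, t) eT eT = (∑ i, D2 (x, t) (eV i) (eV i)) - |u x t| ^ (p - 1) * u x t := by
    intro x t ht
    have h1 : deriv (fun τ => deriv (fun σ => u x σ) τ) t = D2 (x, t) eT eT := by
      have hev : (fun τ => deriv (fun σ => u x σ) τ) =ᶠ[nhds t] (fun τ => D (x, τ) eT) := by
        filter_upwards [isOpen_Ioo.mem_nhds ht] with τ hτ using (hw x hτ).deriv
      rw [hev.deriv_eq]
      exact (hDT x eT ht).deriv
    have h2 : lap (fun y => u y t) x = ∑ i, D2 (x, t) (eV i) (eV i) := by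
      unfold lap
      apply Finset.sum_congr rfl
      intro i _
      have hev : (fun s => deriv (fun s' => u (Function.update x i s') t) s)
          = fun s => D (Function.update x i s, t) (eV i) :=
        funext fun s => (hg x i ht s).deriv
      rw [hev]
      have h3 := (hDV x i (eV i) ht (x i)).deriv
      rwa [Function.update_eq_self] at h3
    have h4 := hpde x t ht
    rw [h1, h2] at h4
    exact h4
  -- vanishing outside the light cone
  have hOut : ∀ (x : Fin 3 → ℝ) {t : ℝ}, t ∈ Set.Ioo (0:ℝ) 1 → (1 - t) ^ 2 < ∑ i, x i ^ 2 →
      u x t = 0 ∧ D (x, t) eT = 0 ∧ ∀ i, D (x, t) (eV i) = 0 := by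
    intro x t ht hx
    have h0 := hsupp t (Set.Ioo_subset_Ico_self ht) x hx
    have hopen : IsOpen {y : Fin 3 → ℝ | (1 - t) ^ 2 < ∑ j, y j ^ 2} :=
      isOpen_lt continuous_const (continuous_finset_sum _ fun j _ => (continuous_apply j).pow 2)
    refine ⟨h0.1, ?_, ?_⟩
    · have h1 := h0.2
      rwa [(hw x ht).deriv] at h1
    · intro i
      have hcont : Continuous (fun s : ℝ => Function.update x i s) :=
        continuous_const.update i continuous_id
      have hx' : Function.update x i (x i) ∈ {y : Fin 3 → ℝ | (1 - t) ^ 2 < ∑ j, y j ^ 2} := by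
        rwa [Function.update_eq_self]
      have hev : (fun s => u (Function.update x i s) t) =ᶠ[nhds (x i)] fun _ => (0:ℝ) := by
        filter_upwards [hcont.continuousAt.preimage_mem_nhds (hopen.mem_nhds hx')] with s hs
        exact (hsupp t (Set.Ioo_subset_Ico_self ht) _ hs).1
      have h5 : D (x, t) (eV i) = deriv (fun s => u (Function.update x i s) t) (x i) :=
        ((hgx x i ht).deriv).symm
      rw [h5, hev.deriv_eq, deriv_const]
  -- the energy density and total energy
  set e : (Fin 3 → ℝ) → ℝ → ℝ := fun x t =>
    (∑ i, (D (x, t) (eV i)) ^ 2) / 2 + (D (x, t) eT) ^ 2 / 2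
      + |u x t| ^ (p + 1) / (p + 1) with hedef
  set E : ℝ → ℝ := fun t => ∫ x, e x t with hEdef
  have hDct : ∀ {t : ℝ}, t ∈ Set.Ioo (0:ℝ) 1 → Continuous fun x : Fin 3 → ℝ => D (x, t) :=
    fun {t} ht => hDcont.comp_continuous (continuous_id.prodMk continuous_const)
      (fun x => hmem x ht)
  have hD2ct : ∀ {t : ℝ}, t ∈ Set.Ioo (0:ℝ) 1 → Continuous fun x : Fin 3 → ℝ => D2 (x, t) :=
    fun {t} ht => hD2cont.comp_continuous (continuous_id.prodMk continuous_const)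
      (fun x => hmem x ht)
  have huct : ∀ {t : ℝ}, t ∈ Set.Ioo (0:ℝ) 1 → Continuous fun x : Fin 3 → ℝ => u x t :=
    fun {t} ht => (hUΩ.continuousOn).comp_continuous
      (continuous_id.prodMk continuous_const) (fun x => hmem x ht)
  have hgct : ∀ (c : (Fin 3 → ℝ) × ℝ) {t : ℝ}, t ∈ Set.Ioo (0:ℝ) 1 →
      Continuous fun x : Fin 3 → ℝ => D (x, t) c :=
    fun c {t} ht => (ContinuousLinearMap.apply ℝ ℝ c).continuous.comp (hDct ht)
  have hect : ∀ {t : ℝ}, t ∈ Set.Ioo (0:ℝ) 1 → Continuous fun x : Fin 3 → ℝ => e x t := by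
    intro t ht
    refine Continuous.add (Continuous.add ?_ ?_) ?_
    · exact (continuous_finset_sum _ fun i _ => (hgct (eV i) ht).pow 2).div_const 2
    · exact ((hgct eT ht).pow 2).div_const 2
    · exact (((huct ht).abs.rpow_const fun x => Or.inr hp1.le)).div_const (p + 1)
  have hesupp : ∀ {t : ℝ} (_ : t ∈ Set.Ioo (0:ℝ) 1) (x : Fin 3 → ℝ),
      (1 - t) ^ 2 < ∑ i, x i ^ 2 → e x t = 0 := by
    intro t ht x hx
    obtain ⟨h1, h2, h3⟩ := hOut x ht hx
    simp [hedef, h1, h2, h3, Real.zero_rpow (ne_of_gt hp1)]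
  have hKc : IsCompact (Metric.closedBall (0 : Fin 3 → ℝ) 1) := isCompact_closedBall 0 1
  have hnotK : ∀ x : Fin 3 → ℝ, x ∉ Metric.closedBall (0 : Fin 3 → ℝ) 1 →
      1 < ∑ i, x i ^ 2 := by
    intro x hx
    rw [Metric.mem_closedBall, dist_zero_right, not_le] at hx
    obtain ⟨j, hj⟩ : ∃ j, 1 < |x j| := by
      by_contra h; push_neg at h
      have : ‖x‖ ≤ 1 := by
        refine (pi_norm_le_iff_of_nonneg (by norm_num)).2 fun j => ?_
        simpa [Real.norm_eq_abs] using h j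
      linarith
    calc (1:ℝ) < |x j| ^ 2 := one_lt_pow₀ hj two_ne_zero
    _ = x j ^ 2 := sq_abs _
    _ ≤ _ := sq_le_sum j
  have hcone : ∀ {t : ℝ}, t ∈ Set.Ioo (0:ℝ) 1 → (1 - t) ^ 2 ≤ 1 := by
    intro t ht
    have h1 : (0:ℝ) ≤ 1 - t := by linarith [ht.2]
    have h2 : 1 - t ≤ 1 := by linarith [ht.1]
    calc (1-t)^2 ≤ 1^2 := pow_le_pow_left₀ h1 h2 2
    _ = 1 := one_pow 2
  have hecs : ∀ {t : ℝ}, t ∈ Set.Ioo (0:ℝ) 1 → HasCompactSupport (fun x => e x t) :=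
    fun {t} ht => HasCompactSupport.intro hKc
      (fun x hx => hesupp ht x (lt_of_le_of_lt (hcone ht) (hnotK x hx)))
  have heint : ∀ {t : ℝ}, t ∈ Set.Ioo (0:ℝ) 1 → Integrable (fun x => e x t) :=
    fun {t} ht => (hect ht).integrable_of_hasCompactSupport (hecs ht)
  -- the energy is differentiable with zero derivative on (0,1)
  have hE' : ∀ t₀ ∈ Set.Ioo (0:ℝ) 1, HasDerivAt E 0 t₀ := by
    intro t₀ ht₀
    set F' : (Fin 3 → ℝ) → ℝ → ℝ := fun x τ =>
      ∑ i, (D (x, τ) (eV i) * D2 (x, τ) (eV i) eT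
        + D (x, τ) eT * D2 (x, τ) (eV i) (eV i)) with hF'def
    set ε : ℝ := min t₀ (1 - t₀) / 2 with hεdef
    have hmin1 := min_le_left t₀ (1 - t₀)
    have hmin2 := min_le_right t₀ (1 - t₀)
    have ht01 := ht₀.1
    have ht02 := ht₀.2
    have hε : 0 < ε := by
      have h1 : 0 < min t₀ (1 - t₀) := lt_min ht01 (by linarith)
      exact div_pos h1 two_pos
    have hεle : ε ≤ t₀ / 2 := by rw [hεdef]; linarith
    have hεle2 : ε ≤ (1 - t₀) / 2 := by rw [hεdef]; linarith
    have hball : ∀ τ ∈ Metric.ball t₀ ε, τ ∈ Set.Ioo (0:ℝ) 1 := by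
      intro τ hτ
      rw [Metric.mem_ball, Real.dist_eq, abs_lt] at hτ
      exact ⟨by linarith [hτ.1], by linarith [hτ.2]⟩
    have hJsub : Set.Icc (t₀ - ε) (t₀ + ε) ⊆ Set.Ioo (0:ℝ) 1 := by
      intro τ hτ
      exact ⟨by linarith [hτ.1], by linarith [hτ.2]⟩
    have hballJ : Metric.ball t₀ ε ⊆ Set.Icc (t₀ - ε) (t₀ + ε) := by
      intro τ hτ
      rw [Metric.mem_ball, Real.dist_eq, abs_lt] at hτ
      exact ⟨by linarith [hτ.1], by linarith [hτ.2]⟩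
    have hF'cont : ContinuousOn (fun z : (Fin 3 → ℝ) × ℝ => F' z.1 z.2) Ω := by
      apply continuousOn_finset_sum
      intro i _
      refine ContinuousOn.add (ContinuousOn.mul ?_ ?_) (ContinuousOn.mul ?_ ?_)
      · exact (ContinuousLinearMap.apply ℝ ℝ (eV i)).continuous.comp_continuousOn hDcont
      · exact (ContinuousLinearMap.apply ℝ ℝ eT).continuous.comp_continuousOn
          ((ContinuousLinearMap.apply ℝ (((Fin 3 → ℝ) × ℝ) →L[ℝ] ℝ) (eV i)).continuous.comp_continuousOn hD2cont)
      · exact (ContinuousLinearMap.apply ℝ ℝ eT).continuous.comp_continuousOn hDcont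
      · exact (ContinuousLinearMap.apply ℝ ℝ (eV i)).continuous.comp_continuousOn
          ((ContinuousLinearMap.apply ℝ (((Fin 3 → ℝ) × ℝ) →L[ℝ] ℝ) (eV i)).continuous.comp_continuousOn hD2cont)
    have hF'ct : Continuous fun x : Fin 3 → ℝ => F' x t₀ :=
      hF'cont.comp_continuous (continuous_id.prodMk continuous_const) (fun x => hmem x ht₀)
    obtain ⟨C, hC⟩ := (hKc.prod isCompact_Icc).exists_bound_of_continuousOn
      (hF'cont.mono (fun z hz => hmem z.1 (hJsub hz.2)))
    set bound : (Fin 3 → ℝ) → ℝ :=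
      (Metric.closedBall (0 : Fin 3 → ℝ) 1).indicator (fun _ => C) with hbounddef
    have hF'supp : ∀ (x : Fin 3 → ℝ) {τ : ℝ}, τ ∈ Set.Ioo (0:ℝ) 1 →
        1 < ∑ i, x i ^ 2 → F' x τ = 0 := by
      intro x τ hτ hx
      obtain ⟨h1, h2, h3⟩ := hOut x hτ (lt_of_le_of_lt (hcone hτ) hx)
      rw [hF'def]
      apply Finset.sum_eq_zero
      intro i _
      rw [h2, h3 i, zero_mul, zero_mul, add_zero]
    have h_bound : ∀ x, ∀ τ ∈ Metric.ball t₀ ε, ‖F' x τ‖ ≤ bound x := by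
      intro x τ hτ
      by_cases hx : x ∈ Metric.closedBall (0 : Fin 3 → ℝ) 1
      · have h1 := hC (x, τ) ⟨hx, hballJ hτ⟩
        rw [hbounddef, Set.indicator_of_mem hx]
        exact h1
      · rw [hbounddef, Set.indicator_of_notMem hx,
          hF'supp x (hball τ hτ) (hnotK x hx), norm_zero]
    have hbint : Integrable bound volume := by
      rw [hbounddef, integrable_indicator_iff measurableSet_closedBall]
      exact integrableOn_const hKc.measure_lt_top.ne
    have h_diff : ∀ x : Fin 3 → ℝ, ∀ τ ∈ Metric.ball t₀ ε,
        HasDerivAt (fun τ => e x τ) (F' x τ) τ := by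
      intro x τ hτmem
      have hτ : τ ∈ Set.Ioo (0:ℝ) 1 := hball τ hτmem
      have h1 := (HasDerivAt.sum (u := Finset.univ)
        (fun i _ => (hDT x (eV i) hτ).pow 2)).div_const 2
      have h2 := ((hDT x eT hτ).pow 2).div_const 2
      have h3 := ((abs_rpow_hasDerivAt hp (u x τ)).comp τ (hw x hτ)).div_const (p + 1)
      have h4 := (h1.add h2).add h3
      have hterm : ∀ i : Fin 3, ((2:ℕ):ℝ) * D (x, τ) (eV i) ^ (2-1) * D2 (x, τ) eT (eV i)
          = 2 * (D (x, τ) (eV i) * D2 (x, τ) (eV i) eT) := fun i => by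
        rw [hSchwarz x hτ eT (eV i)]; push_cast; ring
      have heq : (∑ i, ((2:ℕ):ℝ) * D (x, τ) (eV i) ^ (2-1) * D2 (x, τ) eT (eV i)) / 2
          + ((2:ℕ):ℝ) * D (x, τ) eT ^ (2-1) * D2 (x, τ) eT eT / 2
          + (p + 1) * |u x τ| ^ (p - 1) * u x τ * D (x, τ) eT / (p + 1) = F' x τ := by
        rw [Finset.sum_congr rfl fun i _ => hterm i, ← Finset.mul_sum, hutt x hτ]
        simp only [hF'def]
        rw [Finset.sum_add_distrib, ← Finset.mul_sum]
        field_simp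
        ring
      rw [heq] at h4
      exact h4
    have hmeasF : ∀ᶠ τ in 𝓝 t₀, AEStronglyMeasurable (fun x => e x τ) volume := by
      filter_upwards [isOpen_Ioo.mem_nhds ht₀] with τ hτ using (hect hτ).aestronglyMeasurable
    have key := hasDerivAt_integral_of_dominated_loc_of_deriv_le
      (F := fun τ (x : Fin 3 → ℝ) => e x τ) (F' := fun τ (x : Fin 3 → ℝ) => F' x τ)
      (bound := bound) (Metric.ball_mem_nhds t₀ hε) hmeasF (heint ht₀) hF'ct.aestronglyMeasurable
      (Filter.Eventually.of_forall h_bound) hbint (Filter.Eventually.of_forall h_diff)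
    -- the divergence theorem shows that the derivative is zero
    have hint0 : ∫ x, F' x t₀ = 0 := by
      set dw : (Fin 3 → ℝ) → (Fin 3 → ℝ) →L[ℝ] ℝ := fun x =>
        (ContinuousLinearMap.apply ℝ ℝ eT).comp
          ((D2 (x, t₀)).comp (ContinuousLinearMap.inl ℝ (Fin 3 → ℝ) ℝ)) with hdwdef
      set dg : (Fin 3 → ℝ) → Fin 3 → (Fin 3 → ℝ) →L[ℝ] ℝ := fun x i =>
        (ContinuousLinearMap.apply ℝ ℝ (eV i)).comp
          ((D2 (x, t₀)).comp (ContinuousLinearMap.inl ℝ (Fin 3 → ℝ) ℝ)) with hdgdef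
      have hcurve : ∀ x : Fin 3 → ℝ,
          HasFDerivAt (fun y : Fin 3 → ℝ => ((y, t₀) : (Fin 3 → ℝ) × ℝ))
            (ContinuousLinearMap.inl ℝ (Fin 3 → ℝ) ℝ) x :=
        fun x => hasFDerivAt_prodMk_left x t₀
      have hw' : ∀ x : Fin 3 → ℝ, HasFDerivAt (fun y => D (y, t₀) eT) (dw x) x :=
        fun x => (ContinuousLinearMap.apply ℝ ℝ eT).hasFDerivAt.comp x
          (((hDdiff x ht₀).hasFDerivAt).comp x (hcurve x))
      have hg' : ∀ (x : Fin 3 → ℝ) (i : Fin 3),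
          HasFDerivAt (fun y => D (y, t₀) (eV i)) (dg x i) x :=
        fun x i => (ContinuousLinearMap.apply ℝ ℝ (eV i)).hasFDerivAt.comp x
          (((hDdiff x ht₀).hasFDerivAt).comp x (hcurve x))
      set v : (Fin 3 → ℝ) → Fin 3 → ℝ := fun y i => D (y, t₀) eT * D (y, t₀) (eV i)
        with hvdef
      set v' : (Fin 3 → ℝ) → (Fin 3 → ℝ) →L[ℝ] (Fin 3 → ℝ) := fun x =>
        ContinuousLinearMap.pi
          (fun i => D (x, t₀) eT • dg x i + D (x, t₀) (eV i) • dw x) with hv'def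
      have hvd : ∀ x, HasFDerivAt v (v' x) x :=
        fun x => hasFDerivAt_pi.2 fun i => (hw' x).mul (hg' x i)
      have hdiv_eq : ∀ x : Fin 3 → ℝ, (∑ i, v' x (Pi.single i 1) i) = F' x t₀ := by
        intro x
        rw [hF'def]
        apply Finset.sum_congr rfl
        intro i _
        rw [hv'def]
        simp only [ContinuousLinearMap.pi_apply, ContinuousLinearMap.add_apply,
          ContinuousLinearMap.coe_smul', Pi.smul_apply, ContinuousLinearMap.coe_comp',
          Function.comp_apply, ContinuousLinearMap.inl_apply,
          ContinuousLinearMap.apply_apply, smul_eq_mul, hdwdef, hdgdef]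
        rw [show ((Pi.single i 1 : Fin 3 → ℝ), (0:ℝ)) = eV i from rfl]
        ring
      have hvsupp : ∀ x : Fin 3 → ℝ, 1 < ∑ i, x i ^ 2 → v x = 0 := by
        intro x hx
        obtain ⟨h1, h2, h3⟩ := hOut x ht₀ (lt_of_le_of_lt (hcone ht₀) hx)
        funext i
        rw [hvdef]
        simp only [h2, zero_mul]
        rfl
      have hdivcont : Continuous fun x : Fin 3 → ℝ => ∑ i, v' x (Pi.single i 1) i := by
        rw [show (fun x : Fin 3 → ℝ => ∑ i, v' x (Pi.single i 1) i)
            = fun x => F' x t₀ from funext hdiv_eq]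
        exact hF'ct
      have h0 := integral_div_zero v v' hvd hdivcont hvsupp
      rw [show (fun x : Fin 3 → ℝ => ∑ i, v' x (Pi.single i 1) i)
          = fun x => F' x t₀ from funext hdiv_eq] at h0
      exact h0
    rw [hint0] at key
    exact key.2
  -- the energy is constant on (0,1)
  have hEconst : ∀ s ∈ Set.Ioo (0:ℝ) 1, ∀ t ∈ Set.Ioo (0:ℝ) 1, s ≤ t → E s = E t := by
    intro s hs t ht hst
    rcases eq_or_lt_of_le hst with h | h
    · rw [h]
    · have hIcc : Set.Icc s t ⊆ Set.Ioo (0:ℝ) 1 :=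
        fun τ hτ => ⟨lt_of_lt_of_le hs.1 hτ.1, lt_of_le_of_lt hτ.2 ht.2⟩
      have hdiff : DifferentiableOn ℝ E (Set.Icc s t) :=
        fun τ hτ => ((hE' τ (hIcc hτ)).differentiableAt).differentiableWithinAt
      have hderiv : ∀ τ ∈ Set.Ico s t, derivWithin E (Set.Icc s t) τ = 0 := by
        intro τ hτ
        exact ((hE' τ (hIcc ⟨hτ.1, le_of_lt hτ.2⟩)).hasDerivWithinAt).derivWithin
          (uniqueDiffOn_Icc h τ ⟨hτ.1, le_of_lt hτ.2⟩)
      exact (constant_of_derivWithin_zero hdiff hderiv t (Set.right_mem_Icc.2 hst)).symm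
  -- Hölder estimate on the energy
  have hq0 : (0:ℝ) < q := by linarith
  have hr0 : (0:ℝ) < r := by linarith
  have hEbound : ∀ t ∈ Set.Ioo (0:ℝ) 1,
      E t ≤ A ^ (2:ℝ) * ((2*(1-t))^3) ^ (1 - 2/q)
        + A ^ (p+1) * ((2*(1-t))^3) ^ (1 - (p+1)/r) := by
    intro t ht
    set S : Set (Fin 3 → ℝ) := {x | ∑ i, x i ^ 2 ≤ (1-t)^2} with hSdef
    have h1t : 0 < 1 - t := by linarith [ht.2]
    have hSsub : S ⊆ Set.pi Set.univ (fun _ : Fin 3 => Set.Icc (-(1-t)) (1-t)) := by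
      intro x hx j _
      have hj : x j ^ 2 ≤ (1-t)^2 := le_trans (sq_le_sum j) hx
      have h2 := abs_le_of_sq_le_sq' hj h1t.le
      exact ⟨h2.1, h2.2⟩
    have hvolS : volume S ≤ ENNReal.ofReal ((2*(1-t))^3) := by
      refine (measure_mono hSsub).trans ?_
      rw [volume_pi_pi, Real.volume_Icc, Finset.prod_const, Finset.card_univ,
        Fintype.card_fin, ← ENNReal.ofReal_pow (by linarith)]
      apply le_of_eq
      congr 1
      ring
    have hSfin : volume S ≠ ⊤ := (hvolS.trans_lt ENNReal.ofReal_lt_top).ne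
    have hvolR : (volume S).toReal ≤ (2*(1-t))^3 := by
      have h2 := ENNReal.toReal_mono ENNReal.ofReal_ne_top hvolS
      rwa [ENNReal.toReal_ofReal (by positivity)] at h2
    have hbdt := hbd t (Set.Ioo_subset_Ico_self ht)
    have hb1 : eLpNorm (fun x : Fin 3 → ℝ =>
        Real.sqrt (∑ i, pder (fun y => u y t) i x ^ 2)) (ENNReal.ofReal q) volume
        ≤ ENNReal.ofReal A := le_trans (le_trans le_self_add le_self_add) hbdt
    have hb2 : eLpNorm (fun x : Fin 3 → ℝ => deriv (fun σ => u x σ) t)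
        (ENNReal.ofReal q) volume ≤ ENNReal.ofReal A :=
      le_trans (le_trans le_add_self le_self_add) hbdt
    have hb3 : eLpNorm (fun x : Fin 3 → ℝ => u x t) (ENNReal.ofReal r) volume
        ≤ ENNReal.ofReal A := le_trans le_add_self hbdt
    have hf1 : (fun x : Fin 3 → ℝ => Real.sqrt (∑ i, pder (fun y => u y t) i x ^ 2))
        = fun x => Real.sqrt (∑ i, (D (x, t) (eV i)) ^ 2) :=
      funext fun x => by
        rw [Finset.sum_congr rfl fun i _ => by rw [hpder x i ht]]
    have hf2 : (fun x : Fin 3 → ℝ => deriv (fun σ => u x σ) t) = fun x => D (x, t) eT :=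
      funext fun x => (hw x ht).deriv
    rw [hf1] at hb1
    rw [hf2] at hb2
    set G : (Fin 3 → ℝ) → ℝ := fun x => Real.sqrt (∑ i, (D (x, t) (eV i)) ^ 2) with hGdef
    have hGcont : Continuous G :=
      (continuous_finset_sum _ fun i _ => (hgct (eV i) ht).pow 2).sqrt
    have hnotS : ∀ x : Fin 3 → ℝ, x ∉ S → (1-t)^2 < ∑ i, x i ^ 2 :=
      fun x hx => not_le.1 hx
    have hGsupp : ∀ x ∉ S, G x = 0 := by
      intro x hx
      obtain ⟨h1, h2, h3⟩ := hOut x ht (hnotS x hx)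
      rw [hGdef]
      simp only [h3]
      simp
    have hwsupp : ∀ x ∉ S, D (x, t) eT = 0 :=
      fun x hx => (hOut x ht (hnotS x hx)).2.1
    have husupp : ∀ x ∉ S, u x t = 0 :=
      fun x hx => (hOut x ht (hnotS x hx)).1
    have hT1 := holder_helper hGcont.aestronglyMeasurable
      (a := 2) (b := q) two_pos hq.le hA hSfin hGsupp hb1
    have hT2 := holder_helper (hgct eT ht).aestronglyMeasurable
      (a := 2) (b := q) two_pos hq.le hA hSfin hwsupp hb2
    have hT3 := holder_helper (huct ht).aestronglyMeasurable
      (a := p+1) (b := r) hp1 hr.le hA hSfin husupp hb3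
    have hint1 : (fun x : Fin 3 → ℝ => |G x| ^ (2:ℝ))
        = fun x => ∑ i, (D (x, t) (eV i)) ^ 2 := by
      funext x
      rw [show ((2:ℝ)) = ((2:ℕ):ℝ) from by norm_num, Real.rpow_natCast, sq_abs, hGdef]
      exact Real.sq_sqrt (Finset.sum_nonneg fun i _ => sq_nonneg _)
    have hint2 : (fun x : Fin 3 → ℝ => |D (x, t) eT| ^ (2:ℝ))
        = fun x => (D (x, t) eT) ^ 2 := by
      funext x
      rw [show ((2:ℝ)) = ((2:ℕ):ℝ) from by norm_num, Real.rpow_natCast, sq_abs]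
    rw [hint1] at hT1
    rw [hint2] at hT2
    -- integrability of the three pieces
    have hcs : ∀ f : (Fin 3 → ℝ) → ℝ, (∀ x ∉ S, f x = 0) → HasCompactSupport f := by
      intro f hf
      refine HasCompactSupport.intro hKc fun x hx => hf x ?_
      intro hxS
      exact absurd (le_trans hxS (hcone ht)) (not_le.2 (hnotK x hx))
    have hi1 : Integrable (fun x : Fin 3 → ℝ => ∑ i, (D (x, t) (eV i)) ^ 2) := by
      refine Continuous.integrable_of_hasCompactSupport
        (continuous_finset_sum _ fun i _ => (hgct (eV i) ht).pow 2) (hcs _ ?_)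
      intro x hx
      obtain ⟨h1, h2, h3⟩ := hOut x ht (hnotS x hx)
      simp [h3]
    have hi2 : Integrable (fun x : Fin 3 → ℝ => (D (x, t) eT) ^ 2) := by
      refine Continuous.integrable_of_hasCompactSupport ((hgct eT ht).pow 2) (hcs _ ?_)
      intro x hx
      rw [hwsupp x hx]
      ring
    have hi3 : Integrable (fun x : Fin 3 → ℝ => |u x t| ^ (p+1)) := by
      refine Continuous.integrable_of_hasCompactSupport
        ((huct ht).abs.rpow_const fun x => Or.inr hp1.le) (hcs _ ?_)
      intro x hx
      rw [husupp x hx, abs_zero, Real.zero_rpow (ne_of_gt hp1)]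
    have hEsplit : E t = (∫ x, ∑ i, (D (x, t) (eV i)) ^ 2) / 2
        + (∫ x, (D (x, t) eT) ^ 2) / 2 + (∫ x, |u x t| ^ (p+1)) / (p+1) := by
      rw [hEdef]
      simp only [hedef]
      have hi12 : Integrable (fun x : Fin 3 → ℝ =>
          (∑ i, (D (x, t) (eV i)) ^ 2) / 2 + (D (x, t) eT) ^ 2 / 2) :=
        (hi1.div_const 2).add (hi2.div_const 2)
      rw [integral_add hi12 (hi3.div_const (p+1)), integral_add (hi1.div_const 2)
        (hi2.div_const 2), integral_div, integral_div, integral_div]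
    have hVq : (volume S).toReal ^ (1 - 2/q) ≤ ((2*(1-t))^3) ^ (1 - 2/q) :=
      Real.rpow_le_rpow ENNReal.toReal_nonneg hvolR (by
        rw [sub_nonneg]
        exact div_le_one_of_le₀ hq.le hq0.le)
    have hVr : (volume S).toReal ^ (1 - (p+1)/r) ≤ ((2*(1-t))^3) ^ (1 - (p+1)/r) :=
      Real.rpow_le_rpow ENNReal.toReal_nonneg hvolR (by
        rw [sub_nonneg]
        exact div_le_one_of_le₀ hr.le hr0.le)
    have hApos2 : (0:ℝ) ≤ A ^ (2:ℝ) := Real.rpow_nonneg hA.le _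
    have hAposp : (0:ℝ) ≤ A ^ (p+1) := Real.rpow_nonneg hA.le _
    have hint3nonneg : 0 ≤ ∫ x, |u x t| ^ (p+1) :=
      integral_nonneg fun x => Real.rpow_nonneg (abs_nonneg _) _
    rw [hEsplit]
    have hb12 : (∫ x, ∑ i, (D (x, t) (eV i)) ^ 2) / 2 + (∫ x, (D (x, t) eT) ^ 2) / 2
        ≤ A ^ (2:ℝ) * ((2*(1-t))^3) ^ (1 - 2/q) := by
      have e1 := hT1.trans (mul_le_mul_of_nonneg_left hVq hApos2)
      have e2 := hT2.trans (mul_le_mul_of_nonneg_left hVq hApos2)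
      linarith
    have hb33 : (∫ x, |u x t| ^ (p+1)) / (p+1)
        ≤ A ^ (p+1) * ((2*(1-t))^3) ^ (1 - (p+1)/r) := by
      have e3 := hT3.trans (mul_le_mul_of_nonneg_left hVr hAposp)
      have e4 : (∫ x, |u x t| ^ (p+1)) / (p+1) ≤ ∫ x, |u x t| ^ (p+1) := by
        rw [div_le_iff₀ hp1]
        nlinarith [hint3nonneg]
      linarith
    linarith
  -- conclusion on (0,1)
  have henonneg : ∀ {τ : ℝ}, τ ∈ Set.Ioo (0:ℝ) 1 → ∀ y : Fin 3 → ℝ, 0 ≤ e y τ := by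
    intro τ hτ y
    rw [hedef]
    have h1 : (0:ℝ) ≤ ∑ i, (D (y, τ) (eV i)) ^ 2 := Finset.sum_nonneg fun i _ => sq_nonneg _
    have h2 : (0:ℝ) ≤ (D (y, τ) eT) ^ 2 := sq_nonneg _
    have h3 : (0:ℝ) ≤ |u y τ| ^ (p+1) := Real.rpow_nonneg (abs_nonneg _) _
    have := div_nonneg h1 (by norm_num : (0:ℝ) ≤ 2)
    have := div_nonneg h2 (by norm_num : (0:ℝ) ≤ 2)
    have := div_nonneg h3 hp1.le
    linarith
  have hzero : ∀ t ∈ Set.Ioo (0:ℝ) 1, ∀ x : Fin 3 → ℝ, u x t = 0 := by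
    intro t ht x
    have hEnonneg : 0 ≤ E t := integral_nonneg fun y => henonneg ht y
    have hk1 : (0:ℝ) < 1 - 2/q := by
      rw [sub_pos, div_lt_one (by linarith : (0:ℝ) < q)]; exact hq
    have hk2 : (0:ℝ) < 1 - (p+1)/r := by
      rw [sub_pos, div_lt_one hr0]; exact hr
    have hle0 : E t ≤ 0 := by
      set B : ℝ → ℝ := fun t' => A ^ (2:ℝ) * ((2*(1-t'))^3) ^ (1 - 2/q)
        + A ^ (p+1) * ((2*(1-t'))^3) ^ (1 - (p+1)/r) with hBdef
      have hbase : Filter.Tendsto (fun t' : ℝ => (2*(1-t'))^3) (𝓝 1) (𝓝 0) := by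
        have hc : Continuous fun t' : ℝ => (2*(1-t'))^3 :=
          ((continuous_const.mul (continuous_const.sub continuous_id)).pow 3)
        have h := hc.tendsto 1
        norm_num at h
        exact h
      have ht1 : Filter.Tendsto (fun t' : ℝ => ((2*(1-t'))^3) ^ (1 - 2/q)) (𝓝 1) (𝓝 0) := by
        have hcont : ContinuousAt (fun y : ℝ => y ^ (1 - 2/q)) 0 :=
          Real.continuousAt_rpow_const 0 _ (Or.inr hk1.le)
        have := hcont.tendsto.comp hbase
        rwa [Real.zero_rpow hk1.ne'] at this
      have ht2 : Filter.Tendsto (fun t' : ℝ => ((2*(1-t'))^3) ^ (1 - (p+1)/r)) (𝓝 1) (𝓝 0) := by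
        have hcont : ContinuousAt (fun y : ℝ => y ^ (1 - (p+1)/r)) 0 :=
          Real.continuousAt_rpow_const 0 _ (Or.inr hk2.le)
        have := hcont.tendsto.comp hbase
        rwa [Real.zero_rpow hk2.ne'] at this
      have hBtend : Filter.Tendsto B (𝓝[<] (1:ℝ)) (𝓝 0) := by
        have h := ((ht1.const_mul (A ^ (2:ℝ))).add (ht2.const_mul (A ^ (p+1))))
        rw [mul_zero, mul_zero, add_zero] at h
        exact h.mono_left nhdsWithin_le_nhds
      have hfreq : ∀ᶠ t' in 𝓝[<] (1:ℝ), E t ≤ B t' := by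
        have hmem' : Set.Ioo t 1 ∈ 𝓝[<] (1:ℝ) := Ioo_mem_nhdsLT_of_mem ⟨ht.2, le_rfl⟩
        filter_upwards [hmem'] with t' ht'
        have ht'mem : t' ∈ Set.Ioo (0:ℝ) 1 := ⟨lt_trans ht.1 ht'.1, ht'.2⟩
        rw [hEconst t ht t' ht'mem (le_of_lt ht'.1)]
        exact hEbound t' ht'mem
      exact ge_of_tendsto hBtend hfreq
    have hE0 : E t = 0 := le_antisymm hle0 hEnonneg
    have hae : (fun y => e y t) =ᵐ[volume] 0 :=
      (integral_eq_zero_iff_of_nonneg (fun y => henonneg ht y) (heint ht)).1 hE0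
    have huae : (fun y => u y t) =ᵐ[volume] (fun _ => 0) := by
      filter_upwards [hae] with y hy
      have hy' : e y t = 0 := hy
      rw [hedef] at hy'
      have h1 : (0:ℝ) ≤ (∑ i, (D (y, t) (eV i)) ^ 2) / 2 :=
        div_nonneg (Finset.sum_nonneg fun i _ => sq_nonneg _) (by norm_num)
      have h2 : (0:ℝ) ≤ (D (y, t) eT) ^ 2 / 2 := div_nonneg (sq_nonneg _) (by norm_num)
      have h3 : (0:ℝ) ≤ |u y t| ^ (p+1) := Real.rpow_nonneg (abs_nonneg _) _
      have h4 : |u y t| ^ (p+1) / (p+1) = 0 := by linarith [div_nonneg h3 hp1.le]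
      field_simp at h4
      rw [mul_zero] at h4
      exact abs_eq_zero.1 ((Real.rpow_eq_zero (abs_nonneg _) hp1.ne').1 h4)
    have hfun := (Continuous.ae_eq_iff_eq volume (huct ht) continuous_const).1 huae
    exact congrFun hfun x
  intro x t ht
  rcases eq_or_lt_of_le ht.1 with h0 | h0
  · -- the boundary case t = 0, by continuity
    have ht0 : t = 0 := h0.symm
    subst ht0
    have hCW : ContinuousWithinAt (fun τ => u x τ) (Set.Ioo (0:ℝ) 1) 0 := by
      have hUc : ContinuousWithinAt U (Set.univ ×ˢ Set.Ico (0:ℝ) 1) (x, 0) :=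
        hu.continuousOn (x, 0) ⟨Set.mem_univ x, le_rfl, one_pos⟩
      have hmap : Set.MapsTo (fun τ : ℝ => ((x, τ) : (Fin 3 → ℝ) × ℝ))
          (Set.Ioo (0:ℝ) 1) (Set.univ ×ˢ Set.Ico (0:ℝ) 1) :=
        fun τ hτ => ⟨Set.mem_univ x, le_of_lt hτ.1, hτ.2⟩
      exact hUc.comp ((continuous_const.prodMk continuous_id).continuousWithinAt) hmap
    haveI hne : (𝓝[Set.Ioo (0:ℝ) 1] (0:ℝ)).NeBot := by
      rw [← mem_closure_iff_nhdsWithin_neBot, closure_Ioo one_ne_zero.symm]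
      exact ⟨le_rfl, zero_le_one⟩
    have h1 : Filter.Tendsto (fun τ => u x τ) (𝓝[Set.Ioo (0:ℝ) 1] 0) (𝓝 (u x 0)) := hCW
    have h2 : Filter.Tendsto (fun τ => u x τ) (𝓝[Set.Ioo (0:ℝ) 1] 0) (𝓝 0) := by
      refine Filter.Tendsto.congr' ?_ tendsto_const_nhds
      filter_upwards [self_mem_nhdsWithin] with τ hτ using (hzero τ hτ x).symm
    exact tendsto_nhds_unique h1 h2
  · exact hzero t ⟨h0, ht.2⟩ x
end
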